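/- arXiv:1906.04817 — 3 statements merged into one kernel-verified Lean document; each statement's English description precedes it below -/
import Mathlib

section
/- Fix a real number p ≥ 1. There exist absolute constants c > 0 and C > 0 such that for every finite metric space (V, d) with |V| = n ≥ 2, there exist a natural number k ≤ c · (log n)^2 and a map f : V → ℝ^k such that for all u, v ∈ V, (1 / (C · log n)) · d(u, v) ≤ ‖f(u) − f(v)‖_p ≤ d(u, v); that is, (V, d) embeds into ℝ^k with the ℓ_p metric with distortion O(log n) in dimension O(log² n). -/
open Finset

namespace BourgainAux

lemma exp_one_le_three : Real.exp 1 ≤ 3 :=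
  le_of_lt (lt_trans Real.exp_one_lt_d9 (by norm_num))

lemma numA (j : ℕ) : (1/3 : ℝ) ≤ (1 - (1/2)^(j+1)) ^ (2^(j+1) - 1) := by
  have h2j : (1:ℝ) ≤ 2 ^ j := one_le_pow₀ (by norm_num)
  have hP : (2:ℝ) ≤ 2 ^ (j+1) := by rw [pow_succ]; nlinarith
  have hP0 : (0:ℝ) < 2 ^ (j+1) := by positivity
  have hP1 : (0:ℝ) < 2 ^ (j+1) - 1 := by linarith
  have hq : (1 - (1/2 : ℝ)^(j+1)) = ((2:ℝ)^(j+1) - 1) / 2^(j+1) := by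
    rw [div_pow, one_pow]; field_simp
  have hMr : ((2^(j+1) - 1 : ℕ) : ℝ) = (2:ℝ)^(j+1) - 1 := by
    have h1 : (1:ℕ) ≤ 2^(j+1) := Nat.one_le_two_pow
    push_cast [h1]
    ring
  set P : ℝ := 2 ^ (j+1) with hPdef
  set M : ℕ := 2^(j+1) - 1 with hMdef
  have hb : P / (P - 1) = 1 + 1/(P-1) := by field_simp; ring
  have h1 : P / (P-1) ≤ Real.exp (1/(P-1)) := by
    rw [hb]
    have := Real.add_one_le_exp (1/(P-1)); linarith
  have h2 : (P/(P-1))^M ≤ 3 := by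
    calc (P/(P-1))^M ≤ (Real.exp (1/(P-1)))^M :=
          pow_le_pow_left₀ (by positivity) h1 M
      _ = Real.exp (M * (1/(P-1))) := (Real.exp_nat_mul _ M).symm
      _ = Real.exp 1 := by rw [hMr]; congr 1; field_simp
      _ ≤ 3 := exp_one_le_three
  have hbpos : (0:ℝ) < (P/(P-1))^M := by positivity
  have hinv : ((P-1)/P)^M = ((P/(P-1))^M)⁻¹ := by
    rw [← inv_pow, inv_div]
  rw [hq, hinv]
  have h3 : (3:ℝ)⁻¹ ≤ ((P/(P-1))^M)⁻¹ := inv_anti₀ hbpos h2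
  linarith


lemma numB (j : ℕ) : (1/3 : ℝ) ≤ 1 - (1 - (1/2)^(j+1)) ^ (2^j : ℕ) := by
  have hq0 : (0:ℝ) < (1/2)^(j+1) := by positivity
  have hq1 : ((1:ℝ)/2)^(j+1) ≤ 1 := by
    apply pow_le_one₀ <;> norm_num
  set q : ℝ := (1/2)^(j+1) with hqdef
  have h1 : 1 - q ≤ Real.exp (-q) := by
    have := Real.add_one_le_exp (-q); linarith
  have h2 : (1 - q)^(2^j : ℕ) ≤ Real.exp (-(2^j : ℕ) * q) := by
    calc (1-q)^(2^j:ℕ) ≤ (Real.exp (-q))^(2^j:ℕ) :=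
          pow_le_pow_left₀ (by linarith) h1 _
      _ = Real.exp ((2^j:ℕ) * (-q)) := (Real.exp_nat_mul _ _).symm
      _ = Real.exp (-(2^j:ℕ) * q) := by ring_nf
  have hqval : ((2:ℝ)^j) * q = 1/2 := by
    rw [hqdef, div_pow, one_pow, pow_succ]
    have : (2:ℝ)^(j+1) ≠ 0 := by positivity
    field_simp
  have h3 : Real.exp (-(2^j:ℕ) * q) = Real.exp (-(1/2)) := by
    congr 1
    push_cast
    nlinarith [hqval]
  have h4 : Real.exp (-(1/2)) ≤ 2/3 := by
    rw [Real.exp_neg]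
    have h5 : (3:ℝ)/2 ≤ Real.exp (1/2) := by
      have := Real.add_one_le_exp (1/2 : ℝ); linarith
    have h6 : (0:ℝ) < Real.exp (1/2) := Real.exp_pos _
    rw [inv_le_comm₀ h6 (by norm_num)]
    linarith
  rw [h3] at h2
  linarith

/-- first-moment principle over a finite type -/
lemma exists_le_weighted_sum {Ω : Type} [Fintype Ω] (w f : Ω → ℝ)
    (h0 : ∀ ω, 0 ≤ w ω) (h1 : ∑ ω, w ω = 1) :
    ∃ ω, f ω ≤ ∑ ω, w ω * f ω := by
  by_contra hcon
  push_neg at hcon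
  obtain ⟨ω₀, hω₀⟩ : ∃ ω, 0 < w ω := by
    by_contra hw
    push_neg at hw
    have : ∑ ω, w ω = 0 := Finset.sum_eq_zero fun ω _ => le_antisymm (hw ω) (h0 ω)
    rw [this] at h1; norm_num at h1
  set S := ∑ ω, w ω * f ω with hS
  have : S < ∑ ω, w ω * f ω := by
    calc S = ∑ ω, w ω * S := by rw [← Finset.sum_mul, h1, one_mul]
      _ < ∑ ω, w ω * f ω := by
          apply Finset.sum_lt_sum
          · intro i _
            exact mul_le_mul_of_nonneg_left (le_of_lt (hcon i)) (h0 i)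
          · exact ⟨ω₀, Finset.mem_univ _, by nlinarith [hcon ω₀]⟩
  exact absurd this (lt_irrefl _)


lemma exists_good_family {Ω ι : Type} [Fintype Ω] [Fintype ι] (w : Ω → ℝ)
    (h0 : ∀ ω, 0 ≤ w ω) (h1 : ∑ ω, w ω = 1) (E : ι → Ω → Prop)
    [∀ i ω, Decidable (E i ω)]
    (hE : ∀ i, (1:ℝ)/9 ≤ ∑ ω, if E i ω then w ω else 0) (m : ℕ) :
    ∃ G : Fin m → Ω, ∀ i,
      (m:ℝ)/18 - Real.log (Fintype.card ι) ≤ ∑ j, (if E i (G j) then (1:ℝ) else 0) := by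
  have hexp : Real.exp (-1) ≤ 1/2 := by
    rw [Real.exp_neg]
    have h2 : (2:ℝ) ≤ Real.exp 1 := by have := Real.add_one_le_exp (1:ℝ); linarith
    rw [inv_le_comm₀ (by positivity) (by norm_num)]
    linarith
  have key : ∀ M : ℕ, ∃ G : Fin M → Ω,
      ∑ i, Real.exp (-(∑ j, if E i (G j) then (1:ℝ) else 0)) ≤
        (Fintype.card ι) * (17/18)^M := by
    intro M
    induction M with
    | zero =>
      refine ⟨Fin.elim0, ?_⟩
      simp
    | succ M ih =>
      obtain ⟨G, hG⟩ := ih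
      have havg : ∑ ω, w ω * (∑ i, Real.exp (-(∑ j : Fin (M+1), if E i ((Fin.snoc G ω : Fin (M+1) → Ω) j) then (1:ℝ) else 0)))
          ≤ (17/18) * ∑ i, Real.exp (-(∑ j, if E i (G j) then (1:ℝ) else 0)) := by
        have hsnoc : ∀ (i : ι) (ω : Ω),
            (∑ j : Fin (M+1), if E i ((Fin.snoc G ω : Fin (M+1) → Ω) j) then (1:ℝ) else 0)
              = (∑ j, if E i (G j) then (1:ℝ) else 0) + (if E i ω then (1:ℝ) else 0) := by
          intro i ω
          rw [Fin.sum_univ_castSucc]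
          simp [Fin.snoc_castSucc, Fin.snoc_last]
        calc ∑ ω, w ω * (∑ i, Real.exp (-(∑ j : Fin (M+1), if E i ((Fin.snoc G ω : Fin (M+1) → Ω) j) then (1:ℝ) else 0)))
            = ∑ i, ∑ ω, w ω * (Real.exp (-(∑ j, if E i (G j) then (1:ℝ) else 0))
                * Real.exp (-(if E i ω then (1:ℝ) else 0))) := by
              rw [Finset.sum_comm]
              refine Finset.sum_congr rfl fun ω _ => ?_
              rw [Finset.mul_sum]
              refine Finset.sum_congr rfl fun i _ => ?_
              rw [hsnoc i ω, neg_add, Real.exp_add]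
          _ = ∑ i, Real.exp (-(∑ j, if E i (G j) then (1:ℝ) else 0))
                * (∑ ω, w ω * Real.exp (-(if E i ω then (1:ℝ) else 0))) := by
              refine Finset.sum_congr rfl fun i _ => ?_
              rw [Finset.mul_sum]
              refine Finset.sum_congr rfl fun ω _ => ?_
              ring
          _ ≤ ∑ i, Real.exp (-(∑ j, if E i (G j) then (1:ℝ) else 0)) * (17/18) := by
              refine Finset.sum_le_sum fun i _ => ?_
              refine mul_le_mul_of_nonneg_left ?_ (Real.exp_nonneg _)
              have heq : ∑ ω, w ω * Real.exp (-(if E i ω then (1:ℝ) else 0))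
                  = 1 - (1 - Real.exp (-1)) * (∑ ω, if E i ω then w ω else 0) := by
                have hpt : ∀ ω, w ω * Real.exp (-(if E i ω then (1:ℝ) else 0))
                    = w ω - (1 - Real.exp (-1)) * (if E i ω then w ω else 0) := by
                  intro ω; by_cases h : E i ω <;> simp [h] <;> ring
                rw [Finset.sum_congr rfl (fun ω _ => hpt ω), Finset.sum_sub_distrib,
                  h1, ← Finset.mul_sum]
              rw [heq]
              have hμ := hE i
              nlinarith [hμ, hexp]
          _ = (17/18) * ∑ i, Real.exp (-(∑ j, if E i (G j) then (1:ℝ) else 0)) := by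
              rw [← Finset.sum_mul]; ring
      obtain ⟨ω, hω⟩ := exists_le_weighted_sum w
        (fun ω => ∑ i, Real.exp (-(∑ j : Fin (M+1), if E i ((Fin.snoc G ω : Fin (M+1) → Ω) j) then (1:ℝ) else 0))) h0 h1
      refine ⟨(Fin.snoc G ω : Fin (M+1) → Ω), ?_⟩
      calc ∑ i, Real.exp (-(∑ j : Fin (M+1), if E i ((Fin.snoc G ω : Fin (M+1) → Ω) j) then (1:ℝ) else 0))
          ≤ (17/18) * ∑ i, Real.exp (-(∑ j, if E i (G j) then (1:ℝ) else 0)) :=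
            le_trans hω havg
        _ ≤ (17/18) * ((Fintype.card ι) * (17/18)^M) := by
            refine mul_le_mul_of_nonneg_left hG (by norm_num)
        _ = (Fintype.card ι) * (17/18)^(M+1) := by ring
  obtain ⟨G, hG⟩ := key m
  refine ⟨G, fun i => ?_⟩
  have hcard : (1:ℝ) ≤ Fintype.card ι := by
    have : 0 < Fintype.card ι := Fintype.card_pos_iff.mpr ⟨i⟩
    exact_mod_cast this
  have hsingle : Real.exp (-(∑ j, if E i (G j) then (1:ℝ) else 0))
      ≤ (Fintype.card ι) * (17/18)^m := by
    refine le_trans ?_ hG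
    exact Finset.single_le_sum
      (f := fun i => Real.exp (-(∑ j, if E i (G j) then (1:ℝ) else 0)))
      (fun i _ => Real.exp_nonneg _) (Finset.mem_univ i)
  have hlog : -(∑ j, if E i (G j) then (1:ℝ) else 0)
      ≤ Real.log (Fintype.card ι) + m * Real.log (17/18) := by
    have hpos : (0:ℝ) < (Fintype.card ι) * (17/18)^m := by positivity
    have := Real.log_le_log (Real.exp_pos _) hsingle
    rw [Real.log_exp, Real.log_mul (by positivity) (by positivity), Real.log_pow] at this
    exact this
  have hlog1718 : Real.log (17/18 : ℝ) ≤ -(1/18) := by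
    have := Real.log_le_sub_one_of_pos (x := (17/18 : ℝ)) (by norm_num)
    linarith
  have : (m:ℝ) * Real.log (17/18) ≤ -((m:ℝ)/18) := by
    have hm : (0:ℝ) ≤ m := Nat.cast_nonneg m
    nlinarith
  linarith


open scoped Classical

section MeasureBool

variable {V : Type} [Fintype V]

noncomputable def weight (q : ℝ) (g : V → Bool) : ℝ := ∏ v, (if g v then q else 1 - q)

lemma weight_nonneg {q : ℝ} (hq0 : 0 ≤ q) (hq1 : q ≤ 1) (g : V → Bool) :
    0 ≤ weight q g :=
  Finset.prod_nonneg fun v _ => by by_cases h : g v <;> simp [weight, h] <;> linarith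

lemma sum_fun_bool_prod (F : V → Bool → ℝ) :
    ∑ g : V → Bool, ∏ v, F v (g v) = ∏ v, (F v true + F v false) := by
  rw [← Fintype.piFinset_univ, Finset.sum_prod_piFinset]
  refine Finset.prod_congr rfl fun v _ => ?_
  simp

lemma weight_sum (q : ℝ) : ∑ g : V → Bool, weight q g = 1 := by
  unfold weight
  rw [sum_fun_bool_prod (fun v b => if b = true then q else 1 - q)]
  simp

lemma weight_event_allfalse (q : ℝ) (S : Finset V) :
    ∑ g : V → Bool, (if (∀ v ∈ S, g v = false) then weight q g else 0)
      = (1-q)^S.card := by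
  have hpt : ∀ g : V → Bool, (if (∀ v ∈ S, g v = false) then weight q g else 0)
      = ∏ v, ((if g v then q else 1-q) * (if v ∈ S ∧ g v then 0 else 1)) := by
    intro g
    by_cases h : ∀ v ∈ S, g v = false
    · rw [if_pos h]
      refine Finset.prod_congr rfl fun v _ => ?_
      have hne : ¬(v ∈ S ∧ g v) := by
        rintro ⟨hv, hg⟩
        rw [h v hv] at hg
        exact Bool.false_ne_true (by simpa using hg)
      rw [if_neg hne, mul_one]
    · rw [if_neg h]
      push_neg at h
      obtain ⟨v₀, hv₀, hg⟩ := h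
      have hgt : g v₀ = true := by
        cases hgv : g v₀
        · exact absurd hgv hg
        · rfl
      symm
      apply Finset.prod_eq_zero (Finset.mem_univ v₀)
      simp [hgt, hv₀]
  rw [Finset.sum_congr rfl fun g _ => hpt g,
    sum_fun_bool_prod (fun v b => (if b = true then q else 1-q) * (if v ∈ S ∧ b = true then 0 else 1))]
  have heach : ∀ v : V,
      ((if (true:Bool) = true then q else 1-q) * (if v ∈ S ∧ (true:Bool) = true then 0 else 1))
      + ((if (false:Bool) = true then q else 1-q) * (if v ∈ S ∧ (false:Bool) = true then 0 else 1))
      = (if v ∈ S then (1-q) else 1) := by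
    intro v
    by_cases h : v ∈ S <;> simp [h]
  rw [Finset.prod_congr rfl fun v _ => heach v, Finset.prod_ite_mem, Finset.univ_inter,
    Finset.prod_const]

lemma weight_event_two (q : ℝ) (S₁ S₂ : Finset V) (hdisj : Disjoint S₁ S₂) :
    ∑ g : V → Bool,
      (if ((∀ v ∈ S₁, g v = false) ∧ (∃ v ∈ S₂, g v = true)) then weight q g else 0)
      = (1-q)^S₁.card * (1 - (1-q)^S₂.card) := by
  have hsplit : ∀ g : V → Bool, (if (∀ v ∈ S₁, g v = false) then weight q g else 0)
      = (if ((∀ v ∈ S₁, g v = false) ∧ (∃ v ∈ S₂, g v = true)) then weight q g else 0)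
        + (if (∀ v ∈ S₁ ∪ S₂, g v = false) then weight q g else 0) := by
    intro g
    by_cases h1 : ∀ v ∈ S₁, g v = false
    · by_cases h2 : ∃ v ∈ S₂, g v = true
      · rw [if_pos h1, if_pos ⟨h1, h2⟩, if_neg, add_zero]
        intro hall
        obtain ⟨v₀, hv₀, hg⟩ := h2
        rw [hall v₀ (Finset.mem_union_right _ hv₀)] at hg
        exact Bool.false_ne_true hg
      · rw [if_pos h1, if_neg (fun hc => h2 hc.2), if_pos, zero_add]
        intro w hw
        rcases Finset.mem_union.mp hw with h | h
        · exact h1 w h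
        · push_neg at h2
          have := h2 w h
          cases hgw : g w
          · rfl
          · exact absurd hgw this
    · rw [if_neg h1, if_neg (fun hc => h1 hc.1), if_neg, add_zero]
      intro hall
      exact h1 fun w hw => hall w (Finset.mem_union_left _ hw)
  have hsum := Finset.sum_congr rfl fun (g : V → Bool) (_ : g ∈ Finset.univ) => hsplit g
  rw [Finset.sum_add_distrib, weight_event_allfalse, weight_event_allfalse,
    Finset.card_union_of_disjoint hdisj, pow_add] at hsum
  have := hsum
  nlinarith [this]

end MeasureBool


section MetricPart

variable {V : Type} [MetricSpace V] [Fintype V]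

noncomputable def dF (g : V → Bool) (u : V) : ℝ :=
  if h : (Finset.univ.filter (fun w => g w = true)).Nonempty
  then (Finset.univ.filter (fun w => g w = true)).inf' h (dist u) else 0

lemma dF_le {g : V → Bool} {w : V} (hw : g w = true) (u : V) : dF g u ≤ dist u w := by
  have hne : (Finset.univ.filter (fun w => g w = true)).Nonempty :=
    ⟨w, Finset.mem_filter.mpr ⟨Finset.mem_univ _, hw⟩⟩
  rw [dF, dif_pos hne]
  exact Finset.inf'_le (dist u) (Finset.mem_filter.mpr ⟨Finset.mem_univ _, hw⟩)

lemma le_dF {g : V → Bool} (hne : (Finset.univ.filter (fun w => g w = true)).Nonempty)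
    {r : ℝ} {u : V} (h : ∀ w, g w = true → r ≤ dist u w) : r ≤ dF g u := by
  rw [dF, dif_pos hne]
  exact Finset.le_inf' hne _ fun w hw => h w (Finset.mem_filter.mp hw).2

lemma dF_nonneg (g : V → Bool) (u : V) : 0 ≤ dF g u := by
  rw [dF]
  split_ifs with h
  · exact Finset.le_inf' h _ fun w _ => dist_nonneg
  · exact le_refl 0

lemma dF_lip (g : V → Bool) (u v : V) : |dF g u - dF g v| ≤ dist u v := by
  have key : ∀ x y : V, dF g x - dF g y ≤ dist x y := by
    intro x y
    by_cases hne : (Finset.univ.filter (fun w => g w = true)).Nonempty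
    · obtain ⟨w₀, hw₀mem, hw₀⟩ := Finset.exists_mem_eq_inf' hne (dist y)
      have hgw₀ : g w₀ = true := (Finset.mem_filter.mp hw₀mem).2
      have h1 : dF g x ≤ dist x w₀ := dF_le hgw₀ x
      have h2 : dF g y = dist y w₀ := by rw [dF, dif_pos hne]; exact hw₀
      have h3 : dist x w₀ ≤ dist x y + dist y w₀ := dist_triangle _ _ _
      linarith
    · rw [dF, dF, dif_neg hne, dif_neg hne]
      simpa using dist_nonneg
  rw [abs_sub_le_iff]
  exact ⟨key u v, by rw [dist_comm]; exact key v u⟩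

noncomputable def DD (u v : V) : Finset ℝ :=
  (Finset.univ.image (dist u)) ∪ (Finset.univ.image (dist v))

def okr (u v : V) (t : ℕ) (ρ : ℝ) : Prop :=
  2^t ≤ (Finset.univ.filter (fun w => dist u w ≤ ρ)).card ∧
  2^t ≤ (Finset.univ.filter (fun w => dist v w ≤ ρ)).card

noncomputable def Rad (u v : V) (t : ℕ) : ℝ :=
  if h : ((DD u v).filter (okr u v t)).Nonempty
  then min (dist u v / 4) (((DD u v).filter (okr u v t)).min' h)
  else dist u v / 4

lemma DD_nonneg {u v : V} {x : ℝ} (hx : x ∈ DD u v) : 0 ≤ x := by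
  rw [DD, Finset.mem_union] at hx
  rcases hx with h | h <;>
  · obtain ⟨w, _, rfl⟩ := Finset.mem_image.mp h
    exact dist_nonneg

lemma Rad_nonneg (u v : V) (t : ℕ) : 0 ≤ Rad u v t := by
  rw [Rad]
  split_ifs with h
  · refine le_min (by positivity) ?_
    exact DD_nonneg (Finset.mem_of_mem_filter _ (Finset.min'_mem _ h))
  · positivity

lemma Rad_le (u v : V) (t : ℕ) : Rad u v t ≤ dist u v / 4 := by
  rw [Rad]
  split_ifs with h
  · exact min_le_left _ _
  · exact le_refl _

lemma Rad_mono (u v : V) {t t' : ℕ} (h : t ≤ t') : Rad u v t ≤ Rad u v t' := by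
  have hsub : ((DD u v).filter (okr u v t')) ⊆ ((DD u v).filter (okr u v t)) := by
    refine Finset.monotone_filter_right (DD u v) ?_
    intro ρ hρ
    have hpow : (2:ℕ)^t ≤ 2^t' := Nat.pow_le_pow_right (by norm_num) h
    exact fun hρ' => ⟨le_trans hpow hρ'.1, le_trans hpow hρ'.2⟩
  rw [Rad, Rad]
  split_ifs with h1 h2 h2
  · refine min_le_min le_rfl ?_
    exact Finset.min'_subset h2 hsub
  · exact min_le_left _ _
  · obtain ⟨x, hx⟩ := h2
    exact absurd ⟨x, hsub hx⟩ h1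
  · exact le_refl _

lemma Rad_card {u v : V} {t : ℕ} (h : Rad u v t < dist u v / 4) : okr u v t (Rad u v t) := by
  by_cases hne : ((DD u v).filter (okr u v t)).Nonempty
  · have hmin := Finset.min'_mem _ hne
    have hok : okr u v t (((DD u v).filter (okr u v t)).min' hne) :=
      (Finset.mem_filter.mp hmin).2
    have heq : Rad u v t = ((DD u v).filter (okr u v t)).min' hne := by
      rw [Rad, dif_pos hne]
      rcases min_cases (dist u v / 4) (((DD u v).filter (okr u v t)).min' hne) with ⟨h1,h2⟩|⟨h1,h2⟩
      · exfalso
        rw [Rad, dif_pos hne, h1] at h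
        linarith
      · exact h1
    rw [heq]
    exact hok
  · exfalso
    rw [Rad, dif_neg hne] at h
    linarith

lemma Rad_top {u v : V} (huv : u ≠ v) {t : ℕ} (hn : Fintype.card V ≤ 2^t) :
    Rad u v t = dist u v / 4 := by
  have hd : 0 < dist u v := dist_pos.mpr huv
  rw [Rad]
  split_ifs with hne
  · have hρ := Finset.min'_mem _ hne
    set ρ := ((DD u v).filter (okr u v t)).min' hne with hρdef
    have hok : okr u v t ρ := (Finset.mem_filter.mp hρ).2
    have huniv : (Finset.univ.filter (fun w => dist u w ≤ ρ)) = Finset.univ := by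
      apply Finset.eq_univ_of_card
      refine le_antisymm (Finset.card_le_univ _) ?_
      calc Fintype.card V ≤ 2^t := hn
        _ ≤ _ := hok.1
    have hvmem : v ∈ Finset.univ.filter (fun w => dist u w ≤ ρ) := by
      rw [huniv]; exact Finset.mem_univ v
    have : dist u v ≤ ρ := (Finset.mem_filter.mp hvmem).2
    have : dist u v / 4 ≤ ρ := by linarith
    exact min_eq_left this
  · rfl


lemma Rad_zero {u v : V} (huv : u ≠ v) : Rad u v 0 = 0 := by
  have hd : 0 < dist u v := dist_pos.mpr huv
  have h0DD : (0:ℝ) ∈ DD u v := by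
    rw [DD, Finset.mem_union]
    left
    exact Finset.mem_image.mpr ⟨u, Finset.mem_univ u, dist_self u⟩
  have hok0 : okr u v 0 (0:ℝ) := by
    constructor <;> [skip; skip] <;>
    · rw [pow_zero]
      refine Nat.succ_le_of_lt (Finset.card_pos.mpr ?_)
      first
      | exact ⟨u, Finset.mem_filter.mpr ⟨Finset.mem_univ u, le_of_eq (dist_self u)⟩⟩
      | exact ⟨v, Finset.mem_filter.mpr ⟨Finset.mem_univ v, le_of_eq (dist_self v)⟩⟩
  have hmem : (0:ℝ) ∈ (DD u v).filter (okr u v 0) :=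
    Finset.mem_filter.mpr ⟨h0DD, hok0⟩
  have hne : ((DD u v).filter (okr u v 0)).Nonempty := ⟨0, hmem⟩
  have hmin0 : ((DD u v).filter (okr u v 0)).min' hne = 0 := by
    refine le_antisymm (Finset.min'_le _ _ hmem) ?_
    exact DD_nonneg (Finset.mem_of_mem_filter _ (Finset.min'_mem _ hne))
  rw [Rad, dif_pos hne, hmin0]
  exact min_eq_right (by linarith)

lemma measure_good_aux (x y : V) (hxy : x ≠ y) (t : ℕ) (s₀ s₁ : ℝ)
    (h0 : 0 ≤ s₀) (h01 : s₀ < s₁) (h1 : s₁ ≤ dist x y / 4)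
    (hS1 : (Finset.univ.filter (fun w => dist x w < s₁)).card ≤ 2^(t+1) - 1)
    (hS2 : 2^t ≤ (Finset.univ.filter (fun w => dist y w ≤ s₀)).card) :
    (1:ℝ)/9 ≤ ∑ g : V → Bool,
      (if s₁ - s₀ ≤ |dF g x - dF g y| then weight ((1/2:ℝ)^(t+1)) g else 0) := by
  set q : ℝ := (1/2)^(t+1) with hqdef
  have hq0 : 0 < q := by positivity
  have hq1 : q ≤ 1 := by
    rw [hqdef]
    apply pow_le_one₀ <;> norm_num
  have hd : 0 < dist x y := dist_pos.mpr hxy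
  set S₁ := Finset.univ.filter (fun w => dist x w < s₁) with hS₁def
  set S₂ := Finset.univ.filter (fun w => dist y w ≤ s₀) with hS₂def
  have hdisj : Disjoint S₁ S₂ := by
    rw [Finset.disjoint_left]
    intro w hw1 hw2
    have h1' : dist x w < s₁ := (Finset.mem_filter.mp hw1).2
    have h2' : dist y w ≤ s₀ := (Finset.mem_filter.mp hw2).2
    have := dist_triangle x w y
    rw [dist_comm w y] at this
    linarith
  have hincl : ∀ g : V → Bool,
      ((∀ w ∈ S₁, g w = false) ∧ (∃ w ∈ S₂, g w = true)) →
        s₁ - s₀ ≤ |dF g x - dF g y| := by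
    rintro g ⟨hall, w₀, hw₀S, hw₀⟩
    have hw₀y : dist y w₀ ≤ s₀ := (Finset.mem_filter.mp hw₀S).2
    have hdFy : dF g y ≤ s₀ := le_trans (dF_le hw₀ y) hw₀y
    have hne : (Finset.univ.filter (fun w => g w = true)).Nonempty :=
      ⟨w₀, Finset.mem_filter.mpr ⟨Finset.mem_univ _, hw₀⟩⟩
    have hdFx : s₁ ≤ dF g x := by
      refine le_dF hne fun w hw => ?_
      by_contra hcon
      push_neg at hcon
      have hwS₁ : w ∈ S₁ := Finset.mem_filter.mpr ⟨Finset.mem_univ _, hcon⟩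
      rw [hall w hwS₁] at hw
      exact Bool.false_ne_true hw
    calc s₁ - s₀ ≤ dF g x - dF g y := by linarith
      _ ≤ |dF g x - dF g y| := le_abs_self _
  have hmono : ∑ g : V → Bool,
      (if ((∀ w ∈ S₁, g w = false) ∧ (∃ w ∈ S₂, g w = true)) then weight q g else 0)
      ≤ ∑ g : V → Bool,
      (if s₁ - s₀ ≤ |dF g x - dF g y| then weight q g else 0) := by
    refine Finset.sum_le_sum fun g _ => ?_
    by_cases h : ((∀ w ∈ S₁, g w = false) ∧ (∃ w ∈ S₂, g w = true))
    · rw [if_pos h, if_pos (hincl g h)]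
    · rw [if_neg h]
      split_ifs with h'
      · exact weight_nonneg (le_of_lt hq0) hq1 g
      · exact le_refl 0
  refine le_trans ?_ hmono
  rw [weight_event_two q S₁ S₂ hdisj]
  have hb0 : (0:ℝ) ≤ 1 - q := by linarith
  have hb1 : 1 - q ≤ 1 := by linarith
  have hA : (1/3 : ℝ) ≤ (1-q)^S₁.card := by
    refine le_trans (numA t) ?_
    exact pow_le_pow_of_le_one hb0 hb1 hS1
  have hB : (1/3 : ℝ) ≤ 1 - (1-q)^S₂.card := by
    have h2 : (1-q)^S₂.card ≤ (1-q)^(2^t : ℕ) := pow_le_pow_of_le_one hb0 hb1 hS2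
    have := numB t
    rw [← hqdef] at this
    linarith
  nlinarith [hA, hB]

lemma measure_good (u v : V) (t : ℕ) :
    (1:ℝ)/9 ≤ ∑ g : V → Bool,
      (if Rad u v (t+1) - Rad u v t ≤ |dF g u - dF g v| then weight ((1/2:ℝ)^(t+1)) g else 0) := by
  by_cases hΔ : Rad u v (t+1) - Rad u v t ≤ 0
  · have hall : ∀ g : V → Bool,
        (if Rad u v (t+1) - Rad u v t ≤ |dF g u - dF g v| then weight ((1/2:ℝ)^(t+1)) g else 0)
        = weight ((1/2:ℝ)^(t+1)) g := fun g =>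
      if_pos (le_trans hΔ (abs_nonneg _))
    rw [Finset.sum_congr rfl fun g _ => hall g, weight_sum]
    norm_num
  · push_neg at hΔ
    have huv : u ≠ v := by
      intro he
      subst he
      have ha := Rad_le u u (t+1)
      have hb := Rad_nonneg u u t
      rw [dist_self] at ha
      norm_num at ha
      linarith
    set s₀ := Rad u v t with hs₀def
    set s₁ := Rad u v (t+1) with hs₁def
    have hd : 0 < dist u v := dist_pos.mpr huv
    have h0 : 0 ≤ s₀ := Rad_nonneg u v t
    have h01 : s₀ < s₁ := by linarith
    have h1 : s₁ ≤ dist u v / 4 := Rad_le u v (t+1)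
    have hs₁pos : 0 < s₁ := lt_of_le_of_lt h0 h01
    -- the closed balls of radius s₀ have ≥ 2^t points
    have hokt : okr u v t s₀ := Rad_card (lt_of_lt_of_le h01 h1)
    -- find ρ : max element of DD below s₁, not ok at scale t+1
    have h0DD : (0:ℝ) ∈ (DD u v).filter (· < s₁) := by
      refine Finset.mem_filter.mpr ⟨?_, hs₁pos⟩
      rw [DD, Finset.mem_union]
      left
      exact Finset.mem_image.mpr ⟨u, Finset.mem_univ u, dist_self u⟩
    have hTne : ((DD u v).filter (· < s₁)).Nonempty := ⟨0, h0DD⟩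
    set ρ := ((DD u v).filter (· < s₁)).max' hTne with hρdef
    have hρmem := Finset.max'_mem _ hTne
    have hρDD : ρ ∈ DD u v := Finset.mem_of_mem_filter _ hρmem
    have hρlt : ρ < s₁ := (Finset.mem_filter.mp hρmem).2
    have hnotok : ¬ okr u v (t+1) ρ := by
      intro hok
      have hmem : ρ ∈ (DD u v).filter (okr u v (t+1)) := Finset.mem_filter.mpr ⟨hρDD, hok⟩
      have hne : ((DD u v).filter (okr u v (t+1))).Nonempty := ⟨ρ, hmem⟩
      have : s₁ ≤ ρ := by
        rw [hs₁def, Rad, dif_pos hne]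
        exact le_trans (min_le_right _ _) (Finset.min'_le _ _ hmem)
      linarith
    rw [okr, not_and_or] at hnotok
    -- open ball of radius s₁ is contained in closed ball of radius ρ
    have hsubball : ∀ z : V, (∀ w : V, dist z w ∈ DD u v) →
        (Finset.univ.filter (fun w => dist z w < s₁))
          ⊆ (Finset.univ.filter (fun w => dist z w ≤ ρ)) := by
      intro z hz
      intro w hw
      have hlt : dist z w < s₁ := (Finset.mem_filter.mp hw).2
      have hmem : dist z w ∈ (DD u v).filter (· < s₁) :=
        Finset.mem_filter.mpr ⟨hz w, hlt⟩
      exact Finset.mem_filter.mpr ⟨Finset.mem_univ _, Finset.le_max' _ _ hmem⟩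
    have huDD : ∀ w : V, dist u w ∈ DD u v := fun w => by
      rw [DD, Finset.mem_union]; left
      exact Finset.mem_image.mpr ⟨w, Finset.mem_univ w, rfl⟩
    have hvDD : ∀ w : V, dist v w ∈ DD u v := fun w => by
      rw [DD, Finset.mem_union]; right
      exact Finset.mem_image.mpr ⟨w, Finset.mem_univ w, rfl⟩
    rcases hnotok with hsmall | hsmall
    · -- x = u, y = v
      have hS1 : (Finset.univ.filter (fun w => dist u w < s₁)).card ≤ 2^(t+1) - 1 := by
        refine Nat.le_sub_one_of_lt (lt_of_le_of_lt ?_ (not_le.mp hsmall))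
        exact Finset.card_le_card (hsubball u huDD)
      exact measure_good_aux u v huv t s₀ s₁ h0 h01 h1 hS1 hokt.2
    · -- x = v, y = u
      have hS1 : (Finset.univ.filter (fun w => dist v w < s₁)).card ≤ 2^(t+1) - 1 := by
        refine Nat.le_sub_one_of_lt (lt_of_le_of_lt ?_ (not_le.mp hsmall))
        exact Finset.card_le_card (hsubball v hvDD)
      have haux := measure_good_aux v u (Ne.symm huv) t s₀ s₁ h0 h01
        (by rw [dist_comm]; exact h1) hS1 hokt.1
      refine le_trans haux (le_of_eq ?_)
      refine Finset.sum_congr rfl fun g _ => ?_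
      rw [abs_sub_comm]


lemma exists_scale_family (t m : ℕ) :
    ∃ G : Fin m → (V → Bool), ∀ u v : V,
      (m:ℝ)/18 - Real.log (Fintype.card (V × V)) ≤
        ∑ j, (if Rad u v (t+1) - Rad u v t ≤ |dF (G j) u - dF (G j) v|
          then (1:ℝ) else 0) := by
  obtain ⟨G, hG⟩ := exists_good_family (Ω := V → Bool) (ι := V × V)
      (weight ((1/2:ℝ)^(t+1)))
      (weight_nonneg (by positivity) (pow_le_one₀ (by norm_num) (by norm_num)))
      (weight_sum _)
      (fun pr g => Rad pr.1 pr.2 (t+1) - Rad pr.1 pr.2 t ≤ |dF g pr.1 - dF g pr.2|)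
      (fun pr => measure_good pr.1 pr.2 t) m
  exact ⟨G, fun u v => hG (u, v)⟩

end MetricPart

end BourgainAux

open BourgainAux in
set_option maxHeartbeats 2000000 in
/-- **Bourgain's theorem (general ℓ_p case).**
Fix a real `p ≥ 1`. There exist absolute constants `c > 0` and `C > 0` such that
every finite metric space `(V, d)` with `|V| = n ≥ 2` embeds into `ℝ^k` with the
ℓ_p metric `‖x - y‖_p = (∑ i, |xᵢ - yᵢ| ^ p) ^ (1/p)`, for some `k ≤ c · (log n)²`,
with distortion at most `C · log n`. -/
theorem bourgain_lp (p : ℝ) (hp : 1 ≤ p) :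
    ∃ c C : ℝ, 0 < c ∧ 0 < C ∧
      ∀ (V : Type) [MetricSpace V] [Fintype V],
        2 ≤ Fintype.card V →
        ∃ (k : ℕ) (f : V → Fin k → ℝ),
          (k : ℝ) ≤ c * (Real.log (Fintype.card V)) ^ 2 ∧
          ∀ u v : V,
            (1 / (C * Real.log (Fintype.card V))) * dist u v ≤
                (∑ i, |f u i - f v i| ^ p) ^ (1 / p) ∧
            (∑ i, |f u i - f v i| ^ p) ^ (1 / p) ≤ dist u v := by
  classical
  have hp0 : (0:ℝ) < p := lt_of_lt_of_le one_pos hp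
  refine ⟨300, 500, by norm_num, by norm_num, ?_⟩
  intro V _ _ hn
  set n := Fintype.card V with hndef
  have hn2 : (2:ℝ) ≤ n := by exact_mod_cast hn
  have hn1R : (1:ℝ) < n := by linarith
  have hlnpos : 0 < Real.log n := Real.log_pos hn1R
  have hln2 : Real.log 2 ≤ Real.log n := Real.log_le_log (by norm_num) hn2
  have hlog2 : (0.6931471803:ℝ) < Real.log 2 := Real.log_two_gt_d9
  set L := Nat.clog 2 n with hLdef
  have hL1 : 1 ≤ L := Nat.clog_pos (by norm_num) hn
  have h2L : n ≤ 2^L := Nat.le_pow_clog (by norm_num) n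
  have hLR1 : (1:ℝ) ≤ L := by exact_mod_cast hL1
  have hLpos : (0:ℝ) < L := by linarith
  have hLle : (L:ℝ) ≤ 3 * Real.log n := by
    have hnot : ¬ (n ≤ 2^(L-1)) := by
      intro hcon
      have h := (Nat.clog_le_iff_le_pow (by norm_num : (1:ℕ) < 2)).mpr hcon
      omega
    push_neg at hnot
    have hreal : ((2:ℝ))^(L-1) < (n:ℝ) := by exact_mod_cast hnot
    have h1 : Real.log ((2:ℝ)^(L-1)) ≤ Real.log n :=
      Real.log_le_log (by positivity) (le_of_lt hreal)
    rw [Real.log_pow, Nat.cast_sub hL1, Nat.cast_one] at h1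
    nlinarith [h1, hlog2, hln2, hlnpos]
  set m := Nat.ceil ((72:ℝ) * Real.log n) with hmdef
  have hm_lb : (72:ℝ) * Real.log n ≤ m := Nat.le_ceil _
  have hm_ub : (m:ℝ) ≤ 74 * Real.log n := by
    have h1 : ((m:ℝ)) < 72 * Real.log n + 1 := Nat.ceil_lt_add_one (by positivity)
    nlinarith [hlog2, hln2]
  have hm1 : 1 ≤ m := Nat.ceil_pos.mpr (by positivity)
  have hmR1 : (1:ℝ) ≤ m := by exact_mod_cast hm1
  have hmpos : (0:ℝ) < m := by linarith
  -- choose good families of sets at every scale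
  have hGGex := fun t : Fin L => exists_scale_family (V := V) (t:ℕ) m
  choose GG hGG using hGGex
  have hnne : (n:ℝ) ≠ 0 := by positivity
  have hlogcard : Real.log (Fintype.card (V × V)) = 2 * Real.log n := by
    rw [Fintype.card_prod, ← hndef]
    push_cast
    rw [Real.log_mul hnne hnne]
    ring
  have hcnt : ∀ (t : Fin L) (u v : V), (m:ℝ)/36 ≤
      ∑ j, (if Rad u v ((t:ℕ)+1) - Rad u v (t:ℕ) ≤
          |dF (GG t j) u - dF (GG t j) v| then (1:ℝ) else 0) := by
    intro t u v
    have h := hGG t u v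
    rw [hlogcard] at h
    refine le_trans ?_ h
    linarith [hm_lb]
  -- the embedding
  have hk1 : 1 ≤ L * m := Nat.one_le_iff_ne_zero.mpr (Nat.mul_ne_zero (by omega) (by omega))
  have hkR : (0:ℝ) < ((L*m : ℕ):ℝ) := by exact_mod_cast hk1
  set σ : ℝ := (((L*m : ℕ):ℝ))⁻¹ ^ (1/p) with hσdef
  have hσ0 : 0 ≤ σ := by rw [hσdef]; positivity
  have hσp : σ ^ p = (((L*m : ℕ):ℝ))⁻¹ := by
    rw [hσdef, ← Real.rpow_mul (by positivity), one_div_mul_cancel (ne_of_gt hp0),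
      Real.rpow_one]
  set e := (finProdFinEquiv : Fin L × Fin m ≃ Fin (L * m)) with hedef
  set F : V → Fin (L*m) → ℝ :=
    fun z i => σ * dF (GG (e.symm i).1 (e.symm i).2) z with hFdef
  refine ⟨L * m, F, ?_, ?_⟩
  · -- dimension bound
    push_cast
    nlinarith [hLle, hm_ub, hlnpos,
      mul_le_mul hLle hm_ub (by positivity) (by positivity : (0:ℝ) ≤ 3 * Real.log n),
      sq_nonneg (Real.log n)]
  · intro u v
    have hsum_eq : (∑ i, |F u i - F v i| ^ p)
        = ∑ t : Fin L, ∑ j : Fin m, (σ * |dF (GG t j) u - dF (GG t j) v|) ^ p := by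
      rw [← Equiv.sum_comp e (fun i => |F u i - F v i| ^ p), Fintype.sum_prod_type]
      refine Finset.sum_congr rfl fun t _ => Finset.sum_congr rfl fun j _ => ?_
      simp only [hFdef, Equiv.symm_apply_apply]
      rw [← mul_sub, abs_mul, abs_of_nonneg hσ0]
    have hsumnn : (0:ℝ) ≤ ∑ i, |F u i - F v i| ^ p :=
      Finset.sum_nonneg fun i _ => Real.rpow_nonneg (abs_nonneg _) p
    constructor
    · -- lower bound
      rcases eq_or_ne u v with rfl | huv
      · rw [dist_self, mul_zero]
        exact Real.rpow_nonneg hsumnn _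
      · have hd : 0 < dist u v := dist_pos.mpr huv
        have htel : ∑ t : Fin L, (Rad u v ((t:ℕ)+1) - Rad u v (t:ℕ)) = dist u v / 4 := by
          rw [Fin.sum_univ_eq_sum_range (fun i => Rad u v (i+1) - Rad u v i) L,
            Finset.sum_range_sub (Rad u v) L, Rad_zero huv, Rad_top huv h2L, sub_zero]
        have hΔ0 : ∀ t : Fin L, 0 ≤ Rad u v ((t:ℕ)+1) - Rad u v (t:ℕ) := by
          intro t
          have := Rad_mono u v (Nat.le_succ (t:ℕ))
          linarith
        have hscale : ∀ t : Fin L,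
            (m:ℝ)/36 * (σ * (Rad u v ((t:ℕ)+1) - Rad u v (t:ℕ)))^p
              ≤ ∑ j : Fin m, (σ * |dF (GG t j) u - dF (GG t j) v|) ^ p := by
          intro t
          calc (m:ℝ)/36 * (σ * (Rad u v ((t:ℕ)+1) - Rad u v (t:ℕ)))^p
              ≤ (∑ j, (if Rad u v ((t:ℕ)+1) - Rad u v (t:ℕ) ≤
                  |dF (GG t j) u - dF (GG t j) v| then (1:ℝ) else 0))
                * (σ * (Rad u v ((t:ℕ)+1) - Rad u v (t:ℕ)))^p :=
                mul_le_mul_of_nonneg_right (hcnt t u v)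
                  (Real.rpow_nonneg (mul_nonneg hσ0 (hΔ0 t)) p)
            _ = ∑ j, (if Rad u v ((t:ℕ)+1) - Rad u v (t:ℕ) ≤
                  |dF (GG t j) u - dF (GG t j) v| then
                    (σ * (Rad u v ((t:ℕ)+1) - Rad u v (t:ℕ)))^p else 0) := by
                rw [Finset.sum_mul]
                refine Finset.sum_congr rfl fun j _ => ?_
                rw [ite_mul, one_mul, zero_mul]
            _ ≤ ∑ j, (σ * |dF (GG t j) u - dF (GG t j) v|) ^ p := by
                refine Finset.sum_le_sum fun j _ => ?_
                split_ifs with h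
                · exact Real.rpow_le_rpow (mul_nonneg hσ0 (hΔ0 t))
                    (mul_le_mul_of_nonneg_left h hσ0) (le_of_lt hp0)
                · exact Real.rpow_nonneg (mul_nonneg hσ0 (abs_nonneg _)) p
        have hjensen : ((1/(L:ℝ)) * (dist u v/4))^p
            ≤ (1/(L:ℝ)) * ∑ t : Fin L, (Rad u v ((t:ℕ)+1) - Rad u v (t:ℕ))^p := by
          have hj := Real.rpow_arith_mean_le_arith_mean_rpow Finset.univ
            (fun _ : Fin L => 1/(L:ℝ)) (fun t : Fin L => Rad u v ((t:ℕ)+1) - Rad u v (t:ℕ))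
            (fun i _ => by positivity)
            (by
              rw [Finset.sum_const, Finset.card_univ, Fintype.card_fin, nsmul_eq_mul]
              field_simp)
            (fun i _ => hΔ0 i) hp
          rw [← Finset.mul_sum, htel, ← Finset.mul_sum] at hj
          exact hj
        have hA : (L:ℝ) * ((dist u v/(4*(L:ℝ)))^p)
            ≤ ∑ t : Fin L, (Rad u v ((t:ℕ)+1) - Rad u v (t:ℕ))^p := by
          have heq : (1/(L:ℝ)) * (dist u v/4) = dist u v/(4*(L:ℝ)) := by
            ring
          rw [heq] at hjensen
          have h2 := mul_le_mul_of_nonneg_left hjensen (le_of_lt hLpos)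
          have h3 : (L:ℝ) * ((1/(L:ℝ)) * ∑ t : Fin L,
              (Rad u v ((t:ℕ)+1) - Rad u v (t:ℕ))^p)
              = ∑ t : Fin L, (Rad u v ((t:ℕ)+1) - Rad u v (t:ℕ))^p := by
            field_simp
          linarith [h2, h3.symm ▸ h2]
        have hsum_lower : (dist u v/(144*(L:ℝ)))^p ≤ ∑ i, |F u i - F v i| ^ p := by
          rw [hsum_eq]
          have step1 : ∑ t : Fin L, (m:ℝ)/36 * (σ * (Rad u v ((t:ℕ)+1) - Rad u v (t:ℕ)))^p
              ≤ ∑ t : Fin L, ∑ j : Fin m, (σ * |dF (GG t j) u - dF (GG t j) v|) ^ p :=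
            Finset.sum_le_sum fun t _ => hscale t
          have step2 : ∑ t : Fin L, (m:ℝ)/36 * (σ * (Rad u v ((t:ℕ)+1) - Rad u v (t:ℕ)))^p
              = (m:ℝ)/36 * (σ^p * ∑ t : Fin L, (Rad u v ((t:ℕ)+1) - Rad u v (t:ℕ))^p) := by
            rw [Finset.mul_sum, Finset.mul_sum]
            refine Finset.sum_congr rfl fun t _ => ?_
            rw [Real.mul_rpow hσ0 (hΔ0 t)]
          have step3 : (m:ℝ)/36 * (σ^p * ((L:ℝ) * ((dist u v/(4*(L:ℝ)))^p)))
              ≤ ∑ t : Fin L, (m:ℝ)/36 * (σ * (Rad u v ((t:ℕ)+1) - Rad u v (t:ℕ)))^p := by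
            rw [step2]
            refine mul_le_mul_of_nonneg_left ?_ (by positivity)
            exact mul_le_mul_of_nonneg_left hA (Real.rpow_nonneg (by positivity) p)
          have step4 : (m:ℝ)/36 * (σ^p * ((L:ℝ) * ((dist u v/(4*(L:ℝ)))^p)))
              = (1/36) * (dist u v/(4*(L:ℝ)))^p := by
            rw [hσp]
            push_cast
            field_simp
          have step5 : (dist u v/(144*(L:ℝ)))^p ≤ (1/36) * (dist u v/(4*(L:ℝ)))^p := by
            have heq : dist u v/(144*(L:ℝ)) = (1/36) * (dist u v/(4*(L:ℝ))) := by
              field_simp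
              try ring
              try exact Or.inl trivial
            rw [heq, Real.mul_rpow (by norm_num) (by positivity)]
            refine mul_le_mul_of_nonneg_right ?_ (Real.rpow_nonneg (by positivity) p)
            have h36 : ((1:ℝ)/36)^p ≤ ((1:ℝ)/36)^(1:ℝ) :=
              Real.rpow_le_rpow_of_exponent_ge (by norm_num) (by norm_num) hp
            rw [Real.rpow_one] at h36
            exact h36
          calc (dist u v/(144*(L:ℝ)))^p ≤ (1/36) * (dist u v/(4*(L:ℝ)))^p := step5
            _ = (m:ℝ)/36 * (σ^p * ((L:ℝ) * ((dist u v/(4*(L:ℝ)))^p))) := step4.symm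
            _ ≤ _ := le_trans step3 step1
        have hfinal : (1/(500*Real.log n)) * dist u v ≤ dist u v/(144*(L:ℝ)) := by
          have h144 : (144:ℝ)*L ≤ 500 * Real.log n := by nlinarith [hLle, hlnpos]
          have hden : (0:ℝ) < 144*(L:ℝ) := by positivity
          have hinv := one_div_le_one_div_of_le hden h144
          calc (1/(500*Real.log n)) * dist u v ≤ (1/(144*(L:ℝ))) * dist u v :=
                mul_le_mul_of_nonneg_right hinv (le_of_lt hd)
            _ = dist u v/(144*(L:ℝ)) := by ring
        calc (1/(500*Real.log n)) * dist u v ≤ dist u v/(144*(L:ℝ)) := hfinal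
          _ = ((dist u v/(144*(L:ℝ)))^p)^(1/p) := by
              rw [← Real.rpow_mul (by positivity), mul_one_div, div_self (ne_of_gt hp0),
                Real.rpow_one]
          _ ≤ (∑ i, |F u i - F v i| ^ p)^(1/p) :=
              Real.rpow_le_rpow (by positivity) hsum_lower (by positivity)
    · -- upper bound
      have h1 : ∑ i, |F u i - F v i| ^ p ≤ dist u v ^ p := by
        rw [hsum_eq]
        have hptwise : ∀ (t : Fin L) (j : Fin m),
            (σ * |dF (GG t j) u - dF (GG t j) v|) ^ p ≤ σ^p * dist u v ^ p := by
          intro t j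
          rw [← Real.mul_rpow hσ0 dist_nonneg]
          exact Real.rpow_le_rpow (by positivity)
            (mul_le_mul_of_nonneg_left (dF_lip _ u v) hσ0) (le_of_lt hp0)
        calc ∑ t : Fin L, ∑ j : Fin m, (σ * |dF (GG t j) u - dF (GG t j) v|) ^ p
            ≤ ∑ t : Fin L, ∑ j : Fin m, σ^p * dist u v ^ p :=
              Finset.sum_le_sum fun t _ => Finset.sum_le_sum fun j _ => hptwise t j
          _ = ((L*m:ℕ):ℝ) * (σ^p * dist u v ^p) := by
              rw [Finset.sum_const, Finset.sum_const]
              simp only [Finset.card_univ, Fintype.card_fin, nsmul_eq_mul]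
              push_cast
              ring
          _ = dist u v ^ p := by
              rw [hσp]
              field_simp
      calc (∑ i, |F u i - F v i| ^ p) ^ (1/p) ≤ (dist u v ^ p) ^ (1/p) :=
            Real.rpow_le_rpow hsumnn h1 (by positivity)
        _ = dist u v := by
            rw [← Real.rpow_mul dist_nonneg, mul_one_div, div_self (ne_of_gt hp0),
              Real.rpow_one]
end

section
/- There exist absolute constants c > 0 and C > 0 such that for every finite metric space (V, d) with |V| = n ≥ 2 there exist a natural number k ≤ c · (log n)^2 and nonempty subsets S₁, …, S_k ⊆ V such that the Fréchet-type map f : V → ℝ^k defined by f(v)ᵢ = d(v, Sᵢ) / k satisfies, for all u, v ∈ V, (1 / (C · log n)) · d(u, v) ≤ ‖f(u) − f(v)‖₁ ≤ d(u, v). -/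
noncomputable def anchorSetDist {V : Type*} [MetricSpace V]
    (v : V) (S : Finset V) (hS : S.Nonempty) : ℝ :=
  S.inf' hS fun u => dist v u

namespace Bourgain

open Finset Real

attribute [local instance] Classical.propDecidable

variable {V : Type} [MetricSpace V] [Fintype V]

/-- closed ball as a Finset -/
noncomputable def cball (x : V) (r : ℝ) : Finset V := univ.filter fun w => dist x w ≤ r

/-- open ball as a Finset -/
noncomputable def oball (x : V) (r : ℝ) : Finset V := univ.filter fun w => dist x w < r

noncomputable def cand (u v : V) (j : ℕ) : Finset ℝ :=
  insert (dist u v / 3)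
    (((univ.image (dist u)) ∪ (univ.image (dist v))).filter
      fun r => r ≤ dist u v / 3 ∧ 2 ^ j ≤ (cball u r).card ∧ 2 ^ j ≤ (cball v r).card)

noncomputable def rho (u v : V) (j : ℕ) : ℝ :=
  (cand u v j).min' ⟨_, mem_insert_self _ _⟩

lemma rho_le (u v : V) (j : ℕ) : rho u v j ≤ dist u v / 3 :=
  min'_le _ _ (mem_insert_self _ _)

lemma rho_nonneg (u v : V) (j : ℕ) : 0 ≤ rho u v j := by
  apply Finset.le_min'
  intro r hr
  rcases mem_insert.mp hr with h | h
  · rw [h]; positivity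
  · rcases mem_union.mp (mem_filter.mp h).1 with h' | h' <;>
    · obtain ⟨w, -, rfl⟩ := mem_image.mp h'
      exact dist_nonneg

lemma rho_zero (u v : V) : rho u v 0 = 0 := by
  refine le_antisymm (Finset.min'_le _ _ ?_) (rho_nonneg u v 0)
  apply mem_insert_of_mem
  rw [mem_filter]
  refine ⟨mem_union_left _ (mem_image.mpr ⟨u, mem_univ u, dist_self u⟩), by positivity, ?_, ?_⟩
  · simpa using Finset.card_pos.mpr ⟨u, by simp [cball, dist_self]⟩
  · simpa using Finset.card_pos.mpr ⟨v, by simp [cball, dist_self]⟩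

lemma rho_mono (u v : V) {j j' : ℕ} (h : j ≤ j') : rho u v j ≤ rho u v j' := by
  apply Finset.min'_subset
  apply insert_subset_insert
  apply Finset.monotone_filter_right
  intro r _
  exact fun ⟨h1, h2, h3⟩ =>
    ⟨h1, le_trans (Nat.pow_le_pow_right (by norm_num) h) h2,
      le_trans (Nat.pow_le_pow_right (by norm_num) h) h3⟩

lemma rho_top (u v : V) (huv : u ≠ v) (hn : 2 ≤ Fintype.card V) :
    rho u v (Nat.clog 2 (Fintype.card V)) = dist u v / 3 := by
  have hd : 0 < dist u v := dist_pos.mpr huv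
  refine le_antisymm (rho_le u v _) (Finset.le_min' _ _ _ ?_)
  intro r hr
  rcases mem_insert.mp hr with h | h
  · exact h.ge
  · exfalso
    obtain ⟨-, h1, h2, -⟩ := mem_filter.mp h
    have hv : v ∉ cball u r := by
      simp only [cball, mem_filter, not_and]
      intro
      linarith
    have hlt : (cball u r).card < Fintype.card V := by
      apply Finset.card_lt_card
      refine ⟨subset_univ _, fun hsub => hv (hsub (mem_univ v))⟩
    have := Nat.le_pow_clog (by norm_num : 1 < 2) (Fintype.card V)
    omega

lemma rho_key (u v : V) (huv : u ≠ v) {j : ℕ} (h : rho u v j < rho u v (j + 1)) :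
    (2 ^ j ≤ (cball u (rho u v j)).card ∧ 2 ^ j ≤ (cball v (rho u v j)).card) ∧
    ((oball u (rho u v (j + 1))).card < 2 ^ (j + 1) ∨
      (oball v (rho u v (j + 1))).card < 2 ^ (j + 1)) := by
  constructor
  · have hmem : rho u v j ∈ cand u v j := Finset.min'_mem _ _
    rcases mem_insert.mp hmem with h' | h'
    · exfalso
      have := rho_le u v (j + 1)
      linarith
    · obtain ⟨-, -, h2, h3⟩ := mem_filter.mp h'
      exact ⟨h2, h3⟩
  · by_contra hcon
    push_neg at hcon
    obtain ⟨hu, hv⟩ := hcon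
    set ρ' := rho u v (j + 1) with hρ'
    have hρ'pos : 0 < ρ' := (rho_nonneg u v j).trans_lt h
    have huo : u ∈ oball u ρ' := by simp [oball, dist_self, hρ'pos]
    have hvo : v ∈ oball v ρ' := by simp [oball, dist_self, hρ'pos]
    have hDu : ((oball u ρ').image (dist u)).Nonempty := ⟨_, mem_image_of_mem _ huo⟩
    have hDv : ((oball v ρ').image (dist v)).Nonempty := ⟨_, mem_image_of_mem _ hvo⟩
    set ru := ((oball u ρ').image (dist u)).max' hDu with hru
    set rv := ((oball v ρ').image (dist v)).max' hDv with hrv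
    set r := max ru rv with hr
    have hrultρ : ru < ρ' := by
      rw [hru, Finset.max'_lt_iff]
      intro b hb
      obtain ⟨w, hw, rfl⟩ := mem_image.mp hb
      exact (mem_filter.mp hw).2
    have hrvltρ : rv < ρ' := by
      rw [hrv, Finset.max'_lt_iff]
      intro b hb
      obtain ⟨w, hw, rfl⟩ := mem_image.mp hb
      exact (mem_filter.mp hw).2
    have hrlt : r < ρ' := max_lt hrultρ hrvltρ
    have hsubu : oball u ρ' ⊆ cball u r := by
      intro w hw
      simp only [cball, mem_filter, mem_univ, true_and]
      exact le_trans (Finset.le_max' _ _ (mem_image_of_mem _ hw)) (le_max_left _ _)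
    have hsubv : oball v ρ' ⊆ cball v r := by
      intro w hw
      simp only [cball, mem_filter, mem_univ, true_and]
      exact le_trans (Finset.le_max' _ _ (mem_image_of_mem _ hw)) (le_max_right _ _)
    have hmem : r ∈ cand u v (j + 1) := by
      apply mem_insert_of_mem
      rw [mem_filter]
      refine ⟨?_, ?_, ?_, ?_⟩
      · rcases max_choice ru rv with h' | h'
        · rw [hr, h']
          apply mem_union_left
          exact (Finset.image_subset_image (filter_subset _ _)) (Finset.max'_mem _ hDu)
        · rw [hr, h']
          apply mem_union_right
          exact (Finset.image_subset_image (filter_subset _ _)) (Finset.max'_mem _ hDv)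
      · linarith [rho_le u v (j + 1)]
      · exact hu.trans (Finset.card_le_card hsubu)
      · exact hv.trans (Finset.card_le_card hsubv)
    have hle : rho u v (j + 1) ≤ r := Finset.min'_le _ _ hmem
    linarith

/-! ### Counting layer -/

lemma card_filter_fin_le (M a : ℕ) :
    ((univ : Finset (Fin M)).filter fun x => a ≤ x.val).card = M - a := by
  have hinj : Function.Injective (Fin.val : Fin M → ℕ) := Fin.val_injective
  have hcard := Finset.card_image_of_injective
    ((univ : Finset (Fin M)).filter fun x => a ≤ x.val) hinj
  have himg : ((univ : Finset (Fin M)).filter fun x => a ≤ x.val).image Fin.val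
      = Finset.Ico a M := by
    ext b
    simp only [mem_image, mem_filter, mem_univ, true_and, Finset.mem_Ico]
    constructor
    · rintro ⟨z, hz, rfl⟩; exact ⟨hz, z.isLt⟩
    · rintro ⟨h1, h2⟩; exact ⟨⟨b, h2⟩, h1, rfl⟩
  rw [himg, Nat.card_Ico] at hcard
  exact hcard.symm

lemma count_pointwise (M : ℕ) (C : Finset V) (a : ℕ) :
    ((univ : Finset (V → Fin M)).filter fun σ => ∀ w ∈ C, a ≤ (σ w : ℕ)).card
      = (M - a) ^ C.card * M ^ (Fintype.card V - C.card) := by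
  have h1 : ((univ : Finset (V → Fin M)).filter fun σ => ∀ w ∈ C, a ≤ (σ w : ℕ)).card
      = Fintype.card {σ : V → Fin M // ∀ w, w ∈ C → a ≤ (σ w : ℕ)} := by
    rw [Fintype.card_subtype]
  rw [h1, Fintype.card_congr (Equiv.subtypePiEquivPi
        (p := fun (w : V) (b : Fin M) => w ∈ C → a ≤ (b : ℕ))), Fintype.card_pi]
  have hcard : ∀ w : V, Fintype.card {b : Fin M // w ∈ C → a ≤ (b : ℕ)}
      = if w ∈ C then M - a else M := by
    intro w
    by_cases hw : w ∈ C
    · rw [if_pos hw, Fintype.card_subtype,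
        Finset.filter_congr (q := fun b : Fin M => a ≤ (b : ℕ)) (fun b _ => by simp [hw])]
      exact card_filter_fin_le M a
    · rw [if_neg hw, Fintype.card_subtype,
        Finset.filter_congr (q := fun _ : Fin M => True) (fun b _ => by simp [hw]),
        Finset.filter_true, card_univ, Fintype.card_fin]
  calc ∏ w : V, Fintype.card {b : Fin M // w ∈ C → a ≤ (b : ℕ)}
      = ∏ w : V, (if w ∈ C then M - a else M) := by
        exact Finset.prod_congr rfl fun w _ => hcard w
    _ = (M - a) ^ C.card * M ^ (Fintype.card V - C.card) := by
        rw [Finset.prod_ite, Finset.prod_const, Finset.prod_const]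
        congr 2
        · simp
        · rw [Finset.filter_not, Finset.card_sdiff_of_subset (filter_subset _ _), Finset.card_univ]
          congr 1
          simp

/-- the per-trial favorable event: the sample avoids the open ball around `x`
and hits the closed ball around `y`. -/
def Ev (x y : V) (r' r : ℝ) (a : ℕ) {M : ℕ} (σ : V → Fin M) : Prop :=
  (∀ w, (σ w : ℕ) < a → ¬ dist x w < r') ∧ ∃ w, (σ w : ℕ) < a ∧ dist y w ≤ r

lemma count_Ev (M : ℕ) (x y : V) (r' r : ℝ) (a : ℕ)
    (hd : Disjoint (oball x r') (cball y r)) :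
    ((univ : Finset (V → Fin M)).filter fun σ => Ev x y r' r a σ).card
      = (M - a) ^ (oball x r').card *
          (M ^ (cball y r).card - (M - a) ^ (cball y r).card) *
          M ^ (Fintype.card V - (oball x r').card - (cball y r).card) := by
  set A := oball x r' with hA
  set B := cball y r with hB
  have hmemA : ∀ w : V, w ∈ A ↔ dist x w < r' := by intro w; simp [hA, oball]
  have hmemB : ∀ w : V, w ∈ B ↔ dist y w ≤ r := by intro w; simp [hB, cball]
  have hsplit : (univ : Finset (V → Fin M)).filter (fun σ => Ev x y r' r a σ)
      = ((univ : Finset (V → Fin M)).filter fun σ => ∀ w ∈ A, a ≤ (σ w : ℕ)) \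
        ((univ : Finset (V → Fin M)).filter fun σ => ∀ w ∈ A ∪ B, a ≤ (σ w : ℕ)) := by
    ext σ
    simp only [mem_sdiff, mem_filter, mem_univ, true_and, Finset.mem_union]
    simp only [Ev]
    constructor
    · rintro ⟨h1, w, hw1, hw2⟩
      refine ⟨fun w' hw' => not_lt.mp fun hlt => h1 w' hlt ((hmemA w').mp hw'), ?_⟩
      intro hall
      exact absurd (hall w (Or.inr ((hmemB w).mpr hw2))) (not_le.mpr hw1)
    · rintro ⟨h1, h2⟩
      constructor
      · intro w hlt hball
        exact absurd (h1 w ((hmemA w).mpr hball)) (not_le.mpr hlt)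
      · by_contra hcon
        push_neg at hcon
        apply h2
        intro w hw
        rcases hw with hw | hw
        · exact h1 w hw
        · by_contra hlt
          exact absurd ((hmemB w).mp hw) (not_le.mpr (hcon w (not_le.mp hlt)))
  have hsub : ((univ : Finset (V → Fin M)).filter fun σ => ∀ w ∈ A ∪ B, a ≤ (σ w : ℕ))
      ⊆ ((univ : Finset (V → Fin M)).filter fun σ => ∀ w ∈ A, a ≤ (σ w : ℕ)) := by
    apply Finset.monotone_filter_right
    intro σ _ hσ w hw
    exact hσ w (Finset.mem_union_left _ hw)
  rw [hsplit, Finset.card_sdiff_of_subset hsub, count_pointwise, count_pointwise,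
    Finset.card_union_of_disjoint hd]
  have hle : A.card + B.card ≤ Fintype.card V := by
    rw [← Finset.card_union_of_disjoint hd, ← Finset.card_univ]
    exact Finset.card_le_card (subset_univ _)
  have hexp : M ^ (Fintype.card V - A.card) =
      M ^ B.card * M ^ (Fintype.card V - A.card - B.card) := by
    rw [← pow_add]
    congr 1
    omega
  have h2 : (M - a) ^ B.card ≤ M ^ B.card := Nat.pow_le_pow_left (Nat.sub_le M a) _
  have h1 : (M - a) ^ (A.card + B.card) * M ^ (Fintype.card V - A.card - B.card)
      ≤ (M - a) ^ A.card * M ^ B.card * M ^ (Fintype.card V - A.card - B.card) := by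
    apply Nat.mul_le_mul_right
    rw [pow_add]
    exact Nat.mul_le_mul_left _ h2
  rw [hexp, ← mul_assoc, ← Nat.sub_sub]
  zify [h1, h2]
  ring

/-! ### Analytic core -/

lemma real_core {q : ℝ} (hq0 : 0 < q) (hq2 : q ≤ 1 / 2) {aN bN : ℕ}
    (ha : (aN : ℝ) * q ≤ 1 - q) (hb : 1 / 2 ≤ (bN : ℝ) * q) :
    (1 / 9 : ℝ) ≤ (1 - q) ^ aN * (1 - (1 - q) ^ bN) := by
  have h1q : 0 < 1 - q := by linarith
  have e3 : (2.7182818286 : ℝ) < 3 := by norm_num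
  have hexp3 : Real.exp 1 < 3 := Real.exp_one_lt_d9.trans e3
  -- lower bound for (1 - q) ^ aN
  have e1 : Real.exp (-(q / (1 - q))) ≤ 1 - q := by
    have h := Real.add_one_le_exp (q / (1 - q))
    have h2 : 1 / (1 - q) ≤ Real.exp (q / (1 - q)) := by
      have : q / (1 - q) + 1 = 1 / (1 - q) := by field_simp; ring
      linarith
    rw [Real.exp_neg]
    rw [inv_le_comm₀ (Real.exp_pos _) h1q]
    calc (1 - q)⁻¹ = 1 / (1 - q) := (one_div _).symm
      _ ≤ Real.exp (q / (1 - q)) := h2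
  have low : (1 / 3 : ℝ) ≤ (1 - q) ^ aN := by
    have e2 : Real.exp (-(q / (1 - q))) ^ aN ≤ (1 - q) ^ aN :=
      pow_le_pow_left₀ (Real.exp_pos _).le e1 aN
    have e4 : Real.exp ((aN : ℝ) * (-(q / (1 - q)))) = Real.exp (-(q / (1 - q))) ^ aN :=
      Real.exp_nat_mul _ aN
    have e5 : (-1 : ℝ) ≤ (aN : ℝ) * (-(q / (1 - q))) := by
      rw [mul_neg, neg_le_neg_iff, ← mul_div_assoc, div_le_one h1q]
      exact ha
    have e6 : Real.exp (-1) ≤ Real.exp ((aN : ℝ) * (-(q / (1 - q)))) :=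
      Real.exp_le_exp.mpr e5
    have e7 : (1 / 3 : ℝ) ≤ Real.exp (-1) := by
      rw [Real.exp_neg]
      rw [le_inv_comm₀ (by norm_num) (Real.exp_pos _)]
      have h3 : (1 / 3 : ℝ)⁻¹ = 3 := by norm_num
      rw [h3]
      linarith
    linarith
  -- upper bound for (1 - q) ^ bN
  have u1 : 1 - q ≤ Real.exp (-q) := by
    have := Real.add_one_le_exp (-q)
    linarith
  have up : (1 - q) ^ bN ≤ 2 / 3 := by
    have u2 : (1 - q) ^ bN ≤ Real.exp (-q) ^ bN := pow_le_pow_left₀ h1q.le u1 bN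
    have u3 : Real.exp (-q) ^ bN = Real.exp ((bN : ℝ) * (-q)) := (Real.exp_nat_mul _ bN).symm
    have u4 : (bN : ℝ) * (-q) ≤ -(1 / 2) := by
      rw [mul_neg, neg_le_neg_iff]
      exact hb
    have u5 : Real.exp ((bN : ℝ) * (-q)) ≤ Real.exp (-(1 / 2)) := Real.exp_le_exp.mpr u4
    have u6 : Real.exp (-(1 / 2)) ≤ 2 / 3 := by
      rw [Real.exp_neg]
      rw [inv_le_comm₀ (Real.exp_pos _) (by norm_num)]
      have := Real.add_one_le_exp (1 / 2 : ℝ)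
      linarith
    linarith
  have hpos : (0 : ℝ) ≤ (1 - q) ^ aN := pow_nonneg h1q.le _
  nlinarith

lemma count_Ev_lower (L j : ℕ) (hj : j + 1 ≤ L) (x y : V) (r' r : ℝ)
    (hd : Disjoint (oball x r') (cball y r))
    (hA : (oball x r').card < 2 ^ (j + 1))
    (hB : 2 ^ j ≤ (cball y r).card) :
    (1 / 9 : ℝ) * ((2 ^ L : ℕ) : ℝ) ^ Fintype.card V ≤
      (((univ : Finset (V → Fin (2 ^ L))).filter
        fun σ => Ev x y r' r (2 ^ (L - (j + 1))) σ).card : ℝ) := by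
  set M := 2 ^ L with hM
  set a := 2 ^ (L - (j + 1)) with ha
  set A := (oball x r').card with hAc
  set B := (cball y r).card with hBc
  set n := Fintype.card V with hn
  have hle : A + B ≤ n := by
    rw [hAc, hBc, ← Finset.card_union_of_disjoint hd, hn, ← Finset.card_univ]
    exact Finset.card_le_card (subset_univ _)
  have haM : a ≤ M := Nat.pow_le_pow_right (by norm_num) (by omega)
  have hsplit : a * 2 ^ (j + 1) = M := by
    rw [ha, hM, ← pow_add]
    congr 1
    omega
  rw [count_Ev M x y r' r a hd]
  rw [← hAc, ← hBc, ← hn]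
  have hMpos : (0 : ℝ) < (M : ℝ) := by
    have : 0 < M := Nat.pow_pos (by norm_num)
    exact_mod_cast this
  have hapos : (0 : ℝ) < (a : ℝ) := by
    have : 0 < a := Nat.pow_pos (by norm_num)
    exact_mod_cast this
  set q : ℝ := (a : ℝ) / (M : ℝ) with hq
  have hq0 : 0 < q := div_pos hapos hMpos
  have h1q : (1 : ℝ) - q = ((M - a : ℕ) : ℝ) / M := by
    rw [Nat.cast_sub haM, sub_div, div_self hMpos.ne', hq]
  have hq2 : q ≤ 1 / 2 := by
    rw [hq, div_le_div_iff₀ hMpos (by norm_num)]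
    have h2 : (2 : ℝ) ≤ 2 ^ (j + 1) := by
      calc (2 : ℝ) = 2 ^ 1 := (pow_one 2).symm
        _ ≤ 2 ^ (j + 1) := by
          apply pow_le_pow_right₀ (by norm_num)
          omega
    have : (a : ℝ) * 2 ≤ (a : ℝ) * 2 ^ (j + 1) := by nlinarith
    calc (a : ℝ) * 2 ≤ (a : ℝ) * 2 ^ (j + 1) := this
      _ = ((a * 2 ^ (j + 1) : ℕ) : ℝ) := by push_cast; ring
      _ = ((M : ℕ) : ℝ) := by rw [hsplit]
      _ = 1 * M := (one_mul _).symm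
  have hAq : (A : ℝ) * q ≤ 1 - q := by
    have hnat : (A + 1) * a ≤ M := by
      calc (A + 1) * a ≤ 2 ^ (j + 1) * a := Nat.mul_le_mul_right a hA
        _ = M := by rw [mul_comm]; exact hsplit
    have hcast : ((A : ℝ) + 1) * a ≤ (M : ℝ) := by exact_mod_cast hnat
    have h2 : (A : ℝ) * a ≤ (M : ℝ) - a := by nlinarith
    calc (A : ℝ) * q = ((A : ℝ) * a) / M := by rw [hq]; ring
      _ ≤ ((M : ℝ) - a) / M := by gcongr
      _ = 1 - q := by rw [hq]; field_simp
  have hBq : (1 / 2 : ℝ) ≤ (B : ℝ) * q := by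
    have hnat : M ≤ 2 * B * a := by
      have hM2 : M = 2 * 2 ^ j * a := by rw [← hsplit]; ring
      rw [hM2]
      exact Nat.mul_le_mul_right a (Nat.mul_le_mul_left 2 hB)
    have hcast : (M : ℝ) ≤ 2 * B * a := by exact_mod_cast hnat
    have h3 : (B : ℝ) * q = ((B : ℝ) * a) / M := by rw [hq]; ring
    rw [h3, le_div_iff₀ hMpos]
    nlinarith
  have core : (1 / 9 : ℝ) ≤ (1 - q) ^ A * (1 - (1 - q) ^ B) := real_core hq0 hq2 hAq hBq
  have hpowle : (M - a) ^ B ≤ M ^ B := Nat.pow_le_pow_left (Nat.sub_le _ _) _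
  have hMn : ((M : ℝ)) ^ n = (M : ℝ) ^ A * (M : ℝ) ^ B * (M : ℝ) ^ (n - A - B) := by
    rw [← pow_add, ← pow_add]
    congr 1
    omega
  have hMne : (M : ℝ) ≠ 0 := hMpos.ne'
  calc (1 / 9 : ℝ) * (M : ℝ) ^ n
      ≤ ((1 - q) ^ A * (1 - (1 - q) ^ B)) * (M : ℝ) ^ n := by
        apply mul_le_mul_of_nonneg_right core
        positivity
    _ = (((M - a : ℕ) : ℝ)) ^ A * ((M : ℝ) ^ B - ((M - a : ℕ) : ℝ) ^ B)
          * (M : ℝ) ^ (n - A - B) := by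
        rw [h1q, hMn, div_pow, div_pow]
        field_simp
    _ = (((M - a) ^ A * (M ^ B - (M - a) ^ B) * M ^ (n - A - B) : ℕ) : ℝ) := by
        push_cast [Nat.cast_sub hpowle]
        ring

/-! ### Sampling and the good event -/

/-- the random set sampled at scale `j` (0-based) from `σ`. -/
noncomputable def samp (L j : ℕ) (σ : V → Fin (2 ^ L)) : Finset V :=
  univ.filter fun w => (σ w).val < 2 ^ (L - (j + 1))

/-- the good event for the (ordered) pair `(u, v)` at scale `j`. -/
def gd (u v : V) (L j : ℕ) (σ : V → Fin (2 ^ L)) : Prop :=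
  Ev u v (rho u v (j + 1)) (rho u v j) (2 ^ (L - (j + 1))) σ ∨
  Ev v u (rho u v (j + 1)) (rho u v j) (2 ^ (L - (j + 1))) σ

lemma gd_count (u v : V) (huv : u ≠ v) {L j : ℕ} (hj : j + 1 ≤ L)
    (hrise : rho u v j < rho u v (j + 1)) :
    (1 / 9 : ℝ) * ((2 ^ L : ℕ) : ℝ) ^ Fintype.card V ≤
      (((univ : Finset (V → Fin (2 ^ L))).filter fun σ => gd u v L j σ).card : ℝ) := by
  obtain ⟨⟨hcu, hcv⟩, hsmall⟩ := rho_key u v huv hrise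
  have hd : 0 < dist u v := dist_pos.mpr huv
  have hρ' := rho_le u v (j + 1)
  have hρ := rho_le u v j
  have hdisj : ∀ x y : V, dist x y = dist u v →
      Disjoint (oball x (rho u v (j + 1))) (cball y (rho u v j)) := by
    intro x y hxy
    rw [Finset.disjoint_left]
    intro w hw1 hw2
    rw [oball, mem_filter] at hw1
    rw [cball, mem_filter] at hw2
    have ht := dist_triangle x w y
    rw [dist_comm w y] at ht
    have h1 := hw1.2
    have h2 := hw2.2
    linarith
  rcases hsmall with hsu | hsv
  · have hlow := count_Ev_lower L j hj u v _ _ (hdisj u v rfl) hsu hcv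
    refine hlow.trans ?_
    have hsub : ((univ : Finset (V → Fin (2 ^ L))).filter
          fun σ => Ev u v (rho u v (j + 1)) (rho u v j) (2 ^ (L - (j + 1))) σ)
        ⊆ ((univ : Finset (V → Fin (2 ^ L))).filter fun σ => gd u v L j σ) := by
      intro σ hσ
      rw [mem_filter] at hσ ⊢
      exact ⟨hσ.1, Or.inl hσ.2⟩
    exact_mod_cast Nat.cast_le.mpr (Finset.card_le_card hsub)
  · have hlow := count_Ev_lower L j hj v u _ _ (hdisj v u (dist_comm v u)) hsv hcu
    refine hlow.trans ?_
    have hsub : ((univ : Finset (V → Fin (2 ^ L))).filter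
          fun σ => Ev v u (rho u v (j + 1)) (rho u v j) (2 ^ (L - (j + 1))) σ)
        ⊆ ((univ : Finset (V → Fin (2 ^ L))).filter fun σ => gd u v L j σ) := by
      intro σ hσ
      rw [mem_filter] at hσ ⊢
      exact ⟨hσ.1, Or.inr hσ.2⟩
    exact_mod_cast Nat.cast_le.mpr (Finset.card_le_card hsub)

/-! ### Numerics -/

lemma seventeen_small : (8 : ℝ) * (17 / 9) ^ 350 < 2 ^ 346 := by
  have key : (17 / 18 : ℝ) ^ 350 < 1 / 128 := by
    have h1 : (17 / 18 : ℝ) ≤ Real.exp (-(1 / 18)) := by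
      have := Real.add_one_le_exp (-(1 / 18) : ℝ)
      linarith
    have h2 : (17 / 18 : ℝ) ^ 350 ≤ Real.exp (-(1 / 18)) ^ 350 :=
      pow_le_pow_left₀ (by norm_num) h1 350
    have h3 : Real.exp (-(1 / 18)) ^ 350 = Real.exp ((350 : ℕ) * (-(1 / 18))) :=
      (Real.exp_nat_mul _ 350).symm
    have h4 : Real.exp ((350 : ℕ) * (-(1 / 18))) ≤ Real.exp (-(5 : ℝ)) := by
      apply Real.exp_le_exp.mpr
      push_cast
      norm_num
    have h5 : Real.exp (-(5 : ℝ)) < 1 / 128 := by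
      rw [Real.exp_neg]
      rw [inv_lt_comm₀ (Real.exp_pos _) (by norm_num)]
      have h6 : ((1 : ℝ) / 128)⁻¹ = 128 := by norm_num
      rw [h6]
      have h7 : Real.exp (5 : ℝ) = Real.exp 1 ^ (5 : ℕ) := by
        rw [← Real.exp_nat_mul]
        norm_num
      rw [h7]
      have h8 : (2.7 : ℝ) ^ (5 : ℕ) ≤ Real.exp 1 ^ (5 : ℕ) :=
        pow_le_pow_left₀ (by norm_num) (by linarith [Real.exp_one_gt_d9]) 5
      nlinarith
    exact (h2.trans (h3.le.trans h4)).trans_lt h5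
  have h9 : (17 / 9 : ℝ) ^ 350 = 2 ^ 350 * (17 / 18) ^ 350 := by
    rw [← mul_pow]
    norm_num
  rw [h9]
  calc (8 : ℝ) * (2 ^ 350 * (17 / 18) ^ 350)
      = (2 : ℝ) ^ 346 * (128 * (17 / 18) ^ 350) := by
        rw [show (350 : ℕ) = 346 + 4 from rfl, pow_add]
        ring
    _ < (2 : ℝ) ^ 346 * (128 * (1 / 128)) := by
        apply mul_lt_mul_of_pos_left _ (by positivity)
        exact mul_lt_mul_of_pos_left key (by norm_num)
    _ ≤ 2 ^ 346 := by norm_num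

lemma numeric_core {n L : ℕ} (h2 : 2 ≤ n) (hL1 : 1 ≤ L) (hn2L : n ≤ 2 ^ L) :
    (n : ℝ) ^ 2 * L * (17 / 9) ^ (350 * L) / 2 ^ (350 * L - 350 * L / 100) < 1 := by
  set m := 350 * L with hm
  set s := m / 100 with hs
  have hms : 346 * L ≤ m - s := by omega
  have hpow2 : (0 : ℝ) < 2 ^ (m - s) := by positivity
  rw [div_lt_one hpow2]
  have hn' : (n : ℝ) ≤ 2 ^ L := by
    calc (n : ℝ) ≤ ((2 ^ L : ℕ) : ℝ) := by exact_mod_cast hn2L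
      _ = 2 ^ L := by push_cast; ring
  have hLr : (L : ℝ) ≤ 2 ^ L := by
    calc (L : ℝ) ≤ ((2 ^ L : ℕ) : ℝ) := by exact_mod_cast (Nat.lt_two_pow_self (n := L)).le
      _ = 2 ^ L := by push_cast; ring
  calc (n : ℝ) ^ 2 * L * (17 / 9) ^ m
      ≤ ((2 : ℝ) ^ L) ^ 2 * 2 ^ L * (17 / 9) ^ m := by gcongr
    _ = (8 * (17 / 9) ^ 350 : ℝ) ^ L := by
        rw [mul_pow]
        congr 1
        · rw [← pow_mul, ← pow_add, show (8 : ℝ) = 2 ^ 3 by norm_num, ← pow_mul]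
          congr 1
          omega
        · rw [← pow_mul, hm, mul_comm 350 L]
    _ < ((2 : ℝ) ^ 346) ^ L := by
        apply pow_lt_pow_left₀ seventeen_small (by positivity)
        omega
    _ = (2 : ℝ) ^ (346 * L) := by rw [← pow_mul, mul_comm]
    _ ≤ 2 ^ (m - s) := by
        apply pow_le_pow_right₀ (by norm_num)
        exact hms

/-! ### Existence of a good sample -/

lemma exists_good_sample (hn : 2 ≤ Fintype.card V) :
    ∃ ω : Fin (350 * Nat.clog 2 (Fintype.card V)) →
        V → Fin (2 ^ Nat.clog 2 (Fintype.card V)),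
      ∀ u v : V, u ≠ v → ∀ j : ℕ, j + 1 ≤ Nat.clog 2 (Fintype.card V) →
        rho u v j < rho u v (j + 1) →
        (350 * Nat.clog 2 (Fintype.card V)) / 100 + 1 ≤
          (univ.filter fun t => gd u v (Nat.clog 2 (Fintype.card V)) j (ω t)).card := by
  set n := Fintype.card V with hnn
  set L := Nat.clog 2 n with hL
  set m := 350 * L with hm
  set s := m / 100 with hs
  have hL1 : 1 ≤ L := Nat.clog_pos (by norm_num) hn
  have hm0 : 0 < m := by omega
  have hsm : s < m := Nat.div_lt_self hm0 (by norm_num)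
  set M := 2 ^ L with hM
  set MnR : ℝ := ((M : ℕ) : ℝ) ^ n with hMnR
  have hMnR0 : (0 : ℝ) < MnR := by
    have : (0 : ℝ) < ((M : ℕ) : ℝ) := by
      have : 0 < M := Nat.pow_pos (by norm_num)
      exact_mod_cast this
    positivity
  have hcardfun : (Fintype.card (V → Fin M) : ℝ) = MnR := by
    rw [Fintype.card_fun, Fintype.card_fin]
    push_cast
    rfl
  -- per-event bound
  have hbadcard : ∀ u v : V, u ≠ v → ∀ j : ℕ, j + 1 ≤ L → rho u v j < rho u v (j + 1) →
      (((univ : Finset (Fin m → V → Fin M)).filter fun ω =>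
          m - s ≤ (univ.filter fun t => ¬ gd u v L j (ω t)).card).card : ℝ) * 2 ^ (m - s)
        ≤ (17 / 9 * MnR) ^ m := by
    intro u v huv j hj hrise
    set c : (V → Fin M) → ℝ := fun σ => if gd u v L j σ then 1 else 2 with hc
    have hc1 : ∀ σ, (1 : ℝ) ≤ c σ := by
      intro σ
      by_cases h : gd u v L j σ <;> simp [hc, h]
    have hsum : ∑ σ : V → Fin M, c σ ≤ 17 / 9 * MnR := by
      have hgood := gd_count u v huv hj hrise
      have hrw : ∀ σ, c σ = 2 - (if gd u v L j σ then (1 : ℝ) else 0) := by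
        intro σ
        by_cases h : gd u v L j σ <;> simp [hc, h] <;> norm_num
      rw [Finset.sum_congr rfl fun σ _ => hrw σ, Finset.sum_sub_distrib,
        Finset.sum_const, Finset.sum_boole, card_univ, nsmul_eq_mul, hcardfun]
      have : (1 / 9 : ℝ) * MnR ≤
          ((univ.filter fun σ : V → Fin M => gd u v L j σ).card : ℝ) := hgood
      linarith
    have hsum0 : (0 : ℝ) ≤ ∑ σ : V → Fin M, c σ :=
      Finset.sum_nonneg fun σ _ => le_trans zero_le_one (hc1 σ)
    have hprod : ∀ ω : Fin m → V → Fin M,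
        m - s ≤ (univ.filter fun t => ¬ gd u v L j (ω t)).card →
        (2 : ℝ) ^ (m - s) ≤ ∏ t, c (ω t) := by
      intro ω hω
      have hpp : ∏ t, c (ω t)
          = 2 ^ (univ.filter fun t => ¬ gd u v L j (ω t)).card := by
        rw [← Finset.prod_filter_mul_prod_filter_not univ
          (fun t => gd u v L j (ω t)) (fun t => c (ω t))]
        have h1 : ∏ t ∈ univ.filter (fun t => gd u v L j (ω t)), c (ω t) = 1 :=
          Finset.prod_eq_one fun t ht => if_pos (mem_filter.mp ht).2
        have h2 : ∏ t ∈ univ.filter (fun t => ¬ gd u v L j (ω t)), c (ω t)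
            = 2 ^ (univ.filter fun t => ¬ gd u v L j (ω t)).card := by
          rw [Finset.prod_congr rfl fun t ht => if_neg (mem_filter.mp ht).2,
            Finset.prod_const]
        rw [h1, h2, one_mul]
      rw [hpp]
      exact pow_le_pow_right₀ one_le_two hω
    calc (((univ : Finset (Fin m → V → Fin M)).filter fun ω =>
            m - s ≤ (univ.filter fun t => ¬ gd u v L j (ω t)).card).card : ℝ) * 2 ^ (m - s)
        = ∑ _ω ∈ (univ : Finset (Fin m → V → Fin M)).filter (fun ω =>
            m - s ≤ (univ.filter fun t => ¬ gd u v L j (ω t)).card), (2 : ℝ) ^ (m - s) := by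
          rw [Finset.sum_const, nsmul_eq_mul]
      _ ≤ ∑ ω ∈ (univ : Finset (Fin m → V → Fin M)).filter (fun ω =>
            m - s ≤ (univ.filter fun t => ¬ gd u v L j (ω t)).card), ∏ t, c (ω t) :=
          Finset.sum_le_sum fun ω hω => hprod ω (mem_filter.mp hω).2
      _ ≤ ∑ ω : Fin m → V → Fin M, ∏ t, c (ω t) :=
          Finset.sum_le_sum_of_subset_of_nonneg (filter_subset _ _)
            fun ω _ _ => Finset.prod_nonneg fun t _ => le_trans zero_le_one (hc1 _)
      _ = (∑ σ : V → Fin M, c σ) ^ m := (Fintype.sum_pow c m).symm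
      _ ≤ (17 / 9 * MnR) ^ m := pow_le_pow_left₀ hsum0 hsum m
  -- union bound
  set bad : Finset (Fin m → V → Fin M) := univ.filter fun ω => ∃ u v : V, u ≠ v ∧
      ∃ j, j + 1 ≤ L ∧ rho u v j < rho u v (j + 1) ∧
        m - s ≤ (univ.filter fun t => ¬ gd u v L j (ω t)).card with hbad
  have hperR : ∀ p : (V × V) × ℕ,
      (((univ : Finset (Fin m → V → Fin M)).filter fun ω => p.1.1 ≠ p.1.2 ∧
        p.2 + 1 ≤ L ∧ rho p.1.1 p.1.2 p.2 < rho p.1.1 p.1.2 (p.2 + 1) ∧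
        m - s ≤ (univ.filter fun t => ¬ gd p.1.1 p.1.2 L p.2 (ω t)).card).card : ℝ)
      ≤ (17 / 9 * MnR) ^ m / 2 ^ (m - s) := by
    rintro ⟨⟨u, v⟩, j⟩
    by_cases hcond : u ≠ v ∧ j + 1 ≤ L ∧ rho u v j < rho u v (j + 1)
    · obtain ⟨h1, h2, h3⟩ := hcond
      rw [le_div_iff₀ (by positivity)]
      refine le_trans ?_ (hbadcard u v h1 j h2 h3)
      apply mul_le_mul_of_nonneg_right _ (by positivity)
      apply Nat.cast_le.mpr
      apply Finset.card_le_card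
      apply Finset.monotone_filter_right
      intro ω _ hω
      exact hω.2.2.2
    · have hempty : ((univ : Finset (Fin m → V → Fin M)).filter fun ω => u ≠ v ∧
          j + 1 ≤ L ∧ rho u v j < rho u v (j + 1) ∧
          m - s ≤ (univ.filter fun t => ¬ gd u v L j (ω t)).card) = ∅ := by
        apply Finset.filter_false_of_mem
        intro ω _
        intro hcon
        exact hcond ⟨hcon.1, hcon.2.1, hcon.2.2.1⟩
      rw [hempty]
      simp only [Finset.card_empty, Nat.cast_zero]
      positivity
  have hsubbad : bad ⊆ ((univ ×ˢ univ : Finset (V × V)) ×ˢ (range L)).biUnion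
      (fun p => (univ : Finset (Fin m → V → Fin M)).filter fun ω => p.1.1 ≠ p.1.2 ∧
        p.2 + 1 ≤ L ∧ rho p.1.1 p.1.2 p.2 < rho p.1.1 p.1.2 (p.2 + 1) ∧
        m - s ≤ (univ.filter fun t => ¬ gd p.1.1 p.1.2 L p.2 (ω t)).card) := by
    intro ω hω
    rw [hbad, mem_filter] at hω
    obtain ⟨-, u, v, huv, j, hj, hrise, hcard⟩ := hω
    apply Finset.mem_biUnion.mpr
    refine ⟨((u, v), j), ?_, ?_⟩
    · rw [Finset.mem_product]
      exact ⟨Finset.mem_product.mpr ⟨mem_univ u, mem_univ v⟩, Finset.mem_range.mpr (by omega)⟩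
    · rw [mem_filter]
      exact ⟨mem_univ ω, huv, hj, hrise, hcard⟩
  have hbadlt : (bad.card : ℝ) < MnR ^ m := by
    have hstep : (bad.card : ℝ) ≤ (n * n * L : ℕ) * ((17 / 9 * MnR) ^ m / 2 ^ (m - s)) := by
      calc (bad.card : ℝ) ≤ ((((univ ×ˢ univ : Finset (V × V)) ×ˢ (range L)).biUnion
            (fun p => (univ : Finset (Fin m → V → Fin M)).filter fun ω => p.1.1 ≠ p.1.2 ∧
              p.2 + 1 ≤ L ∧ rho p.1.1 p.1.2 p.2 < rho p.1.1 p.1.2 (p.2 + 1) ∧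
              m - s ≤ (univ.filter fun t => ¬ gd p.1.1 p.1.2 L p.2 (ω t)).card)).card : ℝ) := by
              exact Nat.cast_le.mpr (Finset.card_le_card hsubbad)
        _ ≤ (((univ ×ˢ univ : Finset (V × V)) ×ˢ (range L)).sum fun p =>
            (((univ : Finset (Fin m → V → Fin M)).filter fun ω => p.1.1 ≠ p.1.2 ∧
              p.2 + 1 ≤ L ∧ rho p.1.1 p.1.2 p.2 < rho p.1.1 p.1.2 (p.2 + 1) ∧
              m - s ≤ (univ.filter fun t => ¬ gd p.1.1 p.1.2 L p.2 (ω t)).card).card : ℝ)) := by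
              exact_mod_cast Finset.card_biUnion_le
        _ ≤ (((univ ×ˢ univ : Finset (V × V)) ×ˢ (range L)).card : ℝ) *
            ((17 / 9 * MnR) ^ m / 2 ^ (m - s)) := by
              rw [← nsmul_eq_mul]
              exact Finset.sum_le_card_nsmul _ _ _ fun p _ => hperR p
        _ = (n * n * L : ℕ) * ((17 / 9 * MnR) ^ m / 2 ^ (m - s)) := by
              have hcc : ((univ ×ˢ univ : Finset (V × V)) ×ˢ (range L)).card = n * n * L := by
                simp [Finset.card_product, hnn]
              rw [hcc]
    refine hstep.trans_lt ?_
    have hkey := numeric_core hn hL1 (Nat.le_pow_clog (by norm_num : 1 < 2) n)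
    rw [← hm, ← hs] at hkey
    have hexpand : ((n * n * L : ℕ) : ℝ) * ((17 / 9 * MnR) ^ m / 2 ^ (m - s))
        = ((n : ℝ) ^ 2 * L * (17 / 9) ^ m / 2 ^ (m - s)) * MnR ^ m := by
      rw [mul_pow]
      push_cast
      ring
    rw [hexpand]
    calc ((n : ℝ) ^ 2 * L * (17 / 9) ^ m / 2 ^ (m - s)) * MnR ^ m
        < 1 * MnR ^ m := by
          apply mul_lt_mul_of_pos_right hkey (by positivity)
      _ = MnR ^ m := one_mul _
  -- extract a good sample
  have hΩcard : (Fintype.card (Fin m → V → Fin M) : ℝ) = MnR ^ m := by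
    rw [Fintype.card_fun, Fintype.card_fin, Fintype.card_fun, Fintype.card_fin, hMnR, ← hnn]
    push_cast
    ring
  have hex : ∃ ω : Fin m → V → Fin M, ω ∉ bad := by
    by_contra hcon
    push_neg at hcon
    have : bad = univ := Finset.eq_univ_iff_forall.mpr hcon
    rw [this, Finset.card_univ] at hbadlt
    rw [hΩcard] at hbadlt
    exact lt_irrefl _ hbadlt
  obtain ⟨ω, hω⟩ := hex
  refine ⟨ω, ?_⟩
  intro u v huv j hj hrise
  have hnotbad : ¬ (m - s ≤ (univ.filter fun t => ¬ gd u v L j (ω t)).card) := by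
    intro hcon
    exact hω (mem_filter.mpr ⟨mem_univ _, u, v, huv, j, hj, hrise, hcon⟩)
  have htot := Finset.card_filter_add_card_filter_not
    (s := (univ : Finset (Fin m))) (p := fun t => gd u v L j (ω t))
  rw [Finset.card_univ, Fintype.card_fin] at htot
  omega

/-! ### Anchor distance facts -/

lemma anchor_congr (u : V) {X Y : Finset V} (hXY : X = Y) (hX : X.Nonempty)
    (hY : Y.Nonempty) : anchorSetDist u X hX = anchorSetDist u Y hY := by
  subst hXY
  rfl

lemma anchor_lip (u v : V) (S : Finset V) (hS : S.Nonempty) :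
    |anchorSetDist u S hS - anchorSetDist v S hS| ≤ dist u v := by
  have h1 : ∀ x y : V, anchorSetDist x S hS - anchorSetDist y S hS ≤ dist x y := by
    intro x y
    obtain ⟨w, hw, hmin⟩ := Finset.exists_mem_eq_inf' hS (fun z => dist y z)
    have h2 : anchorSetDist x S hS ≤ dist x w := Finset.inf'_le _ hw
    have h3 : anchorSetDist y S hS = dist y w := hmin
    have h4 := dist_triangle x y w
    simp only [anchorSetDist] at h2 h3 ⊢
    linarith
  rw [abs_sub_le_iff]
  exact ⟨h1 u v, dist_comm u v ▸ h1 v u⟩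

lemma gd_anchor (u v : V) {L j : ℕ} (σ : V → Fin (2 ^ L)) (h : gd u v L j σ) :
    ∃ hne : (samp L j σ).Nonempty,
      rho u v (j + 1) - rho u v j ≤
        |anchorSetDist u (samp L j σ) hne - anchorSetDist v (samp L j σ) hne| := by
  have main : ∀ x y : V,
      Ev x y (rho u v (j + 1)) (rho u v j) (2 ^ (L - (j + 1))) σ →
      ∃ hne : (samp L j σ).Nonempty,
        rho u v (j + 1) - rho u v j ≤
          anchorSetDist x (samp L j σ) hne - anchorSetDist y (samp L j σ) hne := by
    rintro x y ⟨havoid, w, hw1, hw2⟩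
    have hwmem : w ∈ samp L j σ := mem_filter.mpr ⟨mem_univ _, hw1⟩
    have hne : (samp L j σ).Nonempty := ⟨w, hwmem⟩
    refine ⟨hne, ?_⟩
    have hy : anchorSetDist y (samp L j σ) hne ≤ rho u v j :=
      le_trans (Finset.inf'_le _ hwmem) hw2
    have hx : rho u v (j + 1) ≤ anchorSetDist x (samp L j σ) hne := by
      apply Finset.le_inf'
      intro w' hw'
      have hmem' := (mem_filter.mp hw').2
      have := havoid w' hmem'
      exact not_lt.mp this
    linarith
  rcases h with h | h
  · obtain ⟨hne, hle⟩ := main u v h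
    exact ⟨hne, hle.trans (le_abs_self _)⟩
  · obtain ⟨hne, hle⟩ := main v u h
    refine ⟨hne, ?_⟩
    rw [abs_sub_comm]
    exact hle.trans (le_abs_self _)

lemma clog_le_log {n : ℕ} (hn : 2 ≤ n) :
    (Nat.clog 2 n : ℝ) ≤ 3 * Real.log n := by
  have hL1 : 1 ≤ Nat.clog 2 n := Nat.clog_pos (by norm_num) hn
  set L := Nat.clog 2 n with hL
  have h1 : (2 : ℕ) ^ (L - 1) < n := Nat.pow_pred_clog_lt_self (by norm_num) (by omega)
  have h1' : ((2 : ℝ)) ^ (L - 1) ≤ (n : ℝ) := by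
    calc ((2 : ℝ)) ^ (L - 1) = (((2 : ℕ) ^ (L - 1) : ℕ) : ℝ) := by push_cast; ring
      _ ≤ (n : ℝ) := by exact_mod_cast h1.le
  have h2 : ((L : ℝ) - 1) * Real.log 2 ≤ Real.log n := by
    have hlog := Real.log_le_log (by positivity) h1'
    rw [Real.log_pow] at hlog
    rw [Nat.cast_sub hL1] at hlog
    simpa using hlog
  have hlog2 : (0.6931471803 : ℝ) < Real.log 2 := Real.log_two_gt_d9
  have hlogn : Real.log 2 ≤ Real.log n := by
    apply Real.log_le_log (by norm_num)
    exact_mod_cast hn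
  have hLlog : (L : ℝ) * Real.log 2 ≤ Real.log n + Real.log 2 := by nlinarith
  nlinarith [hLlog, hlog2, hlogn]

/-! ### Main per-space construction -/

lemma main_per_space (V : Type) [MetricSpace V] [Fintype V] (hn : 2 ≤ Fintype.card V) :
    ∃ (k : ℕ) (S : Fin k → Finset V) (hS : ∀ i, (S i).Nonempty),
      (k : ℝ) ≤ 3150 * (Real.log (Fintype.card V)) ^ 2 ∧
      ∀ u v : V,
        (1 / (900 * Real.log (Fintype.card V))) * dist u v ≤
            ∑ i, |anchorSetDist u (S i) (hS i) / k - anchorSetDist v (S i) (hS i) / k| ∧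
        ∑ i, |anchorSetDist u (S i) (hS i) / k - anchorSetDist v (S i) (hS i) / k| ≤
          dist u v := by
  set n := Fintype.card V with hnn
  set L := Nat.clog 2 n with hLdef
  set m := 350 * L with hmdef
  set s := m / 100 with hsdef
  obtain ⟨ω₀, hω₀⟩ := exists_good_sample hn
  set ω : Fin m → V → Fin (2 ^ L) := ω₀ with hωdef
  have hω : ∀ u v : V, u ≠ v → ∀ j : ℕ, j + 1 ≤ L →
      rho u v j < rho u v (j + 1) →
      s + 1 ≤ (univ.filter fun t : Fin m => gd u v L j (ω t)).card := hω₀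
  have hL1 : 1 ≤ L := Nat.clog_pos (by norm_num) hn
  have hm0 : 0 < m := by omega
  have hV : Nonempty V := Fintype.card_pos_iff.mp (by omega)
  have v₀ : V := hV.some
  have hk0 : 0 < L * m := Nat.mul_pos (by omega) hm0
  have hkR : (0 : ℝ) < ((L * m : ℕ) : ℝ) := by exact_mod_cast hk0
  set T : Fin L × Fin m → Finset V := fun p =>
    if h : (samp L p.1.val (ω p.2)).Nonempty then samp L p.1.val (ω p.2) else {v₀} with hT
  have hTne : ∀ p, (T p).Nonempty := by
    intro p
    by_cases h : (samp L p.1.val (ω p.2)).Nonempty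
    · rw [hT]
      dsimp only
      rw [dif_pos h]
      exact h
    · rw [hT]
      dsimp only
      rw [dif_neg h]
      exact ⟨v₀, mem_singleton_self _⟩
  set e : Fin L × Fin m ≃ Fin (L * m) := finProdFinEquiv with he
  have hSep : ∀ p, T (e.symm (e p)) = T p := fun p => by rw [Equiv.symm_apply_apply]
  have hlogpos : (0 : ℝ) < Real.log n := Real.log_pos (by exact_mod_cast hn)
  refine ⟨L * m, fun i => T (e.symm i), fun i => hTne _, ?_, ?_⟩
  · have hlog := clog_le_log hn
    rw [← hLdef] at hlog
    have hkval : ((L * m : ℕ) : ℝ) = 350 * (L : ℝ) * (L : ℝ) := by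
      rw [hmdef]
      push_cast
      ring
    rw [hkval]
    have hsq : (L : ℝ) * L ≤ (3 * Real.log n) * (3 * Real.log n) :=
      mul_self_le_mul_self (Nat.cast_nonneg L) hlog
    nlinarith [hsq, hlogpos]
  intro u v
  have hupper : ∑ i, |anchorSetDist u (T (e.symm i)) (hTne _) / (L * m : ℕ) -
      anchorSetDist v (T (e.symm i)) (hTne _) / (L * m : ℕ)| ≤ dist u v := by
    calc ∑ i, |anchorSetDist u (T (e.symm i)) (hTne _) / ((L * m : ℕ) : ℝ) -
          anchorSetDist v (T (e.symm i)) (hTne _) / ((L * m : ℕ) : ℝ)|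
        ≤ ∑ _i : Fin (L * m), dist u v / ((L * m : ℕ) : ℝ) := by
          apply Finset.sum_le_sum
          intro i _
          rw [div_sub_div_same, abs_div, abs_of_pos hkR]
          gcongr
          exact anchor_lip u v _ _
      _ = dist u v := by
          rw [Finset.sum_const, card_univ, Fintype.card_fin, nsmul_eq_mul]
          field_simp
  constructor
  · by_cases huv : u = v
    · subst huv
      simp only [dist_self, mul_zero]
      apply Finset.sum_nonneg
      intro i _
      exact abs_nonneg _
    · have hd : 0 < dist u v := dist_pos.mpr huv
      have key : ((s : ℝ) + 1) * (dist u v / 3) ≤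
          ∑ i, |anchorSetDist u (T (e.symm i)) (hTne _) -
            anchorSetDist v (T (e.symm i)) (hTne _)| := by
        have perj : ∀ jf : Fin L, ((s : ℝ) + 1) * (rho u v (jf.val + 1) - rho u v jf.val) ≤
            ∑ t : Fin m, |anchorSetDist u (T (jf, t)) (hTne _) -
              anchorSetDist v (T (jf, t)) (hTne _)| := by
          intro jf
          rcases eq_or_lt_of_le (rho_mono u v (Nat.le_succ jf.val)) with heq | hlt
          · rw [← heq]
            simp only [sub_self, mul_zero]
            exact Finset.sum_nonneg fun t _ => abs_nonneg _
          · have hcard := hω u v huv jf.val jf.isLt hlt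
            set G := univ.filter fun t : Fin m => gd u v L jf.val (ω t) with hG
            have hterm : ∀ t ∈ G, rho u v (jf.val + 1) - rho u v jf.val ≤
                |anchorSetDist u (T (jf, t)) (hTne _) -
                  anchorSetDist v (T (jf, t)) (hTne _)| := by
              intro t ht
              have hgd : gd u v L jf.val (ω t) := (mem_filter.mp ht).2
              obtain ⟨hne, hbound⟩ := gd_anchor u v (ω t) hgd
              have hTeq : T (jf, t) = samp L jf.val (ω t) := by
                rw [hT]
                dsimp only
                rw [dif_pos hne]
              rw [anchor_congr u hTeq (hTne _) hne, anchor_congr v hTeq (hTne _) hne]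
              exact hbound
            calc ((s : ℝ) + 1) * (rho u v (jf.val + 1) - rho u v jf.val)
                ≤ (G.card : ℝ) * (rho u v (jf.val + 1) - rho u v jf.val) := by
                  apply mul_le_mul_of_nonneg_right _ (by linarith)
                  exact_mod_cast hcard
              _ ≤ ∑ t ∈ G, |anchorSetDist u (T (jf, t)) (hTne _) -
                    anchorSetDist v (T (jf, t)) (hTne _)| := by
                  rw [← nsmul_eq_mul]
                  exact Finset.card_nsmul_le_sum G _ _ hterm
              _ ≤ ∑ t : Fin m, |anchorSetDist u (T (jf, t)) (hTne _) -
                    anchorSetDist v (T (jf, t)) (hTne _)| :=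
                  Finset.sum_le_sum_of_subset_of_nonneg (filter_subset _ _)
                    fun t _ _ => abs_nonneg _
        have htop : rho u v L = dist u v / 3 := rho_top u v huv hn
        calc ((s : ℝ) + 1) * (dist u v / 3)
            = ∑ j ∈ range L, ((s : ℝ) + 1) * (rho u v (j + 1) - rho u v j) := by
              rw [← Finset.mul_sum, Finset.sum_range_sub (rho u v), htop, rho_zero]
              ring
          _ = ∑ jf : Fin L, ((s : ℝ) + 1) * (rho u v (jf.val + 1) - rho u v jf.val) :=
              (Fin.sum_univ_eq_sum_range
                (fun j => ((s : ℝ) + 1) * (rho u v (j + 1) - rho u v j)) L).symm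
          _ ≤ ∑ jf : Fin L, ∑ t : Fin m, |anchorSetDist u (T (jf, t)) (hTne _) -
                anchorSetDist v (T (jf, t)) (hTne _)| :=
              Finset.sum_le_sum fun jf _ => perj jf
          _ = ∑ p : Fin L × Fin m, |anchorSetDist u (T p) (hTne _) -
                anchorSetDist v (T p) (hTne _)| :=
              (Fintype.sum_prod_type (fun p : Fin L × Fin m =>
                |anchorSetDist u (T p) (hTne p) - anchorSetDist v (T p) (hTne p)|)).symm
          _ = ∑ i, |anchorSetDist u (T (e.symm i)) (hTne _) -
                anchorSetDist v (T (e.symm i)) (hTne _)| := by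
              rw [← Equiv.sum_comp e (fun i => |anchorSetDist u (T (e.symm i)) (hTne _) -
                anchorSetDist v (T (e.symm i)) (hTne _)|)]
              apply Finset.sum_congr rfl
              intro p _
              rw [anchor_congr u (hSep p) (hTne _) (hTne _),
                anchor_congr v (hSep p) (hTne _) (hTne _)]
      have hsumdiv : ∑ i, |anchorSetDist u (T (e.symm i)) (hTne _) / ((L * m : ℕ) : ℝ) -
          anchorSetDist v (T (e.symm i)) (hTne _) / ((L * m : ℕ) : ℝ)|
          = (∑ i, |anchorSetDist u (T (e.symm i)) (hTne _) -
              anchorSetDist v (T (e.symm i)) (hTne _)|) / ((L * m : ℕ) : ℝ) := by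
        rw [Finset.sum_div]
        apply Finset.sum_congr rfl
        intro i _
        rw [div_sub_div_same, abs_div, abs_of_pos hkR]
      rw [hsumdiv]
      have hm100 : (m : ℝ) ≤ 100 * ((s : ℝ) + 1) := by
        have h100 : m ≤ 100 * (s + 1) := by omega
        exact_mod_cast h100
      have hLlog : (L : ℝ) ≤ 3 * Real.log n := clog_le_log hn
      have hfrac : 1 / (900 * Real.log n) * dist u v ≤
          (((s : ℝ) + 1) * (dist u v / 3)) / ((L * m : ℕ) : ℝ) := by
        rw [div_mul_eq_mul_div, one_mul, div_le_div_iff₀ (by positivity) hkR]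
        have hkval : ((L * m : ℕ) : ℝ) = (L : ℝ) * (m : ℝ) := by push_cast; ring
        rw [hkval]
        have e1 : (L : ℝ) * (m : ℝ) ≤ (3 * Real.log n) * (100 * ((s : ℝ) + 1)) :=
          mul_le_mul hLlog hm100 (by positivity) (by positivity)
        have e2 : dist u v * ((L : ℝ) * (m : ℝ)) ≤
            dist u v * ((3 * Real.log n) * (100 * ((s : ℝ) + 1))) :=
          mul_le_mul_of_nonneg_left e1 hd.le
        nlinarith [e2]
      refine hfrac.trans ?_
      gcongr
  · exact hupper

end Bourgain

/-- **Constructive form of Bourgain's theorem via anchor-sets (deterministic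
existence).** There exist absolute constants `c > 0` and `C > 0` such that for
every finite metric space `(V, d)` with `|V| = n ≥ 2` there are `k ≤ c · (log n)²`
nonempty anchor-sets `S₁, …, S_k ⊆ V` for which the Fréchet-type map
`f(v)ᵢ = d(v, Sᵢ) / k` satisfies, for all `u, v`,
`(1 / (C * log n)) * d(u, v) ≤ ‖f u - f v‖₁ ≤ d(u, v)`. -/
theorem bourgain_anchor_sets :
    ∃ c C : ℝ, 0 < c ∧ 0 < C ∧
      ∀ (V : Type) [MetricSpace V] [Fintype V],
        2 ≤ Fintype.card V →
        ∃ (k : ℕ) (S : Fin k → Finset V) (hS : ∀ i, (S i).Nonempty),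
          (k : ℝ) ≤ c * (Real.log (Fintype.card V)) ^ 2 ∧
          ∀ u v : V,
            (1 / (C * Real.log (Fintype.card V))) * dist u v ≤
                ∑ i, |anchorSetDist u (S i) (hS i) / k - anchorSetDist v (S i) (hS i) / k| ∧
            ∑ i, |anchorSetDist u (S i) (hS i) / k - anchorSetDist v (S i) (hS i) / k| ≤
              dist u v :=
  ⟨3150, 900, by norm_num, by norm_num, fun V _ _ hn => Bourgain.main_per_space V hn⟩
end

section
/- Let G be a finite connected simple graph with vertex set V, let q ≥ 1 be a natural number, and let φ : V → C be the map sending each vertex v to the rooted-isomorphism class of its q-hop neighbourhood graph (the subgraph of G induced on the closed ball of radius q around v, rooted at v). Then the following are equivalent: (1) there exists a function h : C × C → ℕ such that for all u, v ∈ V, the shortest-path distance d_sp(u, v) in G equals h(φ(u), φ(v)); (2) no two distinct vertices u ≠ v of G have rooted-isomorphic q-hop neighbourhood graphs, i.e., φ is injective. -/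
/-- Two vertices `u, v` of a simple graph `G` have *rooted-isomorphic `q`-hop
neighbourhood graphs* if there is a graph isomorphism between the subgraphs of `G`
induced on the closed balls of radius `q` (w.r.t. the shortest-path distance)
around `u` and around `v` that maps the root `u` to the root `v`. -/
def rootedIso {V : Type} (G : SimpleGraph V) (q : ℕ) (u v : V) : Prop :=
  ∃ e : (G.induce {w | G.dist u w ≤ q}) ≃g (G.induce {w | G.dist v w ≤ q}),
    e ⟨u, by simp [SimpleGraph.dist_self]⟩ = ⟨v, by simp [SimpleGraph.dist_self]⟩

/-- Rooted isomorphism of `q`-hop neighbourhood graphs is an equivalence relation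
on the vertices of `G`; its quotient is the set `C` of rooted-isomorphism classes. -/
def rootedSetoid {V : Type} (G : SimpleGraph V) (q : ℕ) : Setoid V where
  r := rootedIso G q
  iseqv := by
    constructor
    · intro x
      exact ⟨(SimpleGraph.Iso.refl : G.induce {w | G.dist x w ≤ q} ≃g _), rfl⟩
    · rintro x y ⟨e, he⟩
      exact ⟨e.symm, by rw [← he]; exact e.symm_apply_apply _⟩
    · rintro x y z ⟨e, he⟩ ⟨f, hf⟩
      exact ⟨e.trans f, by rw [RelIso.trans_apply, he, hf]⟩

/-- **Proposition 1 (structure-aware vs. position-aware embeddings).**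
Let `G` be a finite connected simple graph, `q ≥ 1`, and let
`φ : V → C := Quotient.mk (rootedSetoid G q)` send each vertex to the
rooted-isomorphism class of its `q`-hop neighbourhood graph.  Then the
shortest-path distance can be recovered from the classes (i.e. there is
`h : C × C → ℕ` with `d_sp(u, v) = h (φ u, φ v)` for all `u, v`) if and only if
no two distinct vertices have rooted-isomorphic `q`-hop neighbourhood graphs,
i.e. `φ` is injective. -/
theorem structure_aware_iff_injective {V : Type} [Fintype V]
    (G : SimpleGraph V) (hG : G.Connected) (q : ℕ) (hq : 1 ≤ q) :
    (∃ h : Quotient (rootedSetoid G q) × Quotient (rootedSetoid G q) → ℕ,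
        ∀ u v : V,
          G.dist u v =
            h (Quotient.mk (rootedSetoid G q) u, Quotient.mk (rootedSetoid G q) v)) ↔
      Function.Injective (Quotient.mk (rootedSetoid G q)) := by
  constructor
  · rintro ⟨h, hh⟩ u v huv
    have h0 : G.dist u v = 0 := by
      rw [hh u v, huv, ← hh v v, SimpleGraph.dist_self]
    exact ((hG u v).dist_eq_zero_iff.mp h0)
  · intro hinj
    refine ⟨fun p => G.dist p.1.out p.2.out, fun u v => ?_⟩
    have hu : (Quotient.mk (rootedSetoid G q) u).out = u := hinj (Quotient.out_eq _)
    have hv : (Quotient.mk (rootedSetoid G q) v).out = v := hinj (Quotient.out_eq _)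
    simp [hu, hv]
end
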